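/- arXiv:2404.14398 — 5 statements merged into one kernel-verified Lean document; each statement's English description precedes it below -/
import Mathlib

section
/- For each z in {3, 5} (viewed as elements of ZMod 7), the coloring ℓ_z : ℤ × ℤ → ZMod 7 defined by ℓ_z(x, y) = x + z·y (reduced mod 7) is a nice coloring of the triangular lattice graph T: any two distinct vertices of T at graph distance at most 2 receive different values under ℓ_z. -/
/-- The triangular lattice graph on `ℤ × ℤ`: `(a,b)` and `(c,d)` are adjacent iff
`(c − a, d − b) ∈ {(1,0), (−1,0), (0,1), (0,−1), (1,−1), (−1,1)}`. -/
def triLattice : SimpleGraph (ℤ × ℤ) where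
  Adj u v := (v.1 - u.1, v.2 - u.2) ∈
    ({(1, 0), (-1, 0), (0, 1), (0, -1), (1, -1), (-1, 1)} : Set (ℤ × ℤ))
  symm := by
    constructor
    intro u v h
    simp only [Set.mem_insert_iff, Set.mem_singleton_iff, Prod.mk.injEq] at h ⊢
    omega
  loopless := by
    constructor
    intro u h
    simp only [Set.mem_insert_iff, Set.mem_singleton_iff, Prod.mk.injEq] at h
    omega

/-- The linear coloring `ℓ_z : ℤ × ℤ → ZMod 7`, `ℓ_z(x, y) = x + z·y`. -/
def linColoring (z : ZMod 7) (v : ℤ × ℤ) : ZMod 7 :=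
  (v.1 : ZMod 7) + z * (v.2 : ZMod 7)

lemma triLattice_adj_iff (u v : ℤ × ℤ) :
    triLattice.Adj u v ↔ (v.1 - u.1, v.2 - u.2) ∈
      ({(1, 0), (-1, 0), (0, 1), (0, -1), (1, -1), (-1, 1)} : Set (ℤ × ℤ)) := Iff.rfl

lemma reach_h (a b n : ℤ) : triLattice.Reachable (a, b) (a + n, b) := by
  induction n using Int.induction_on with
  | zero => rw [add_zero]
  | succ n ih =>
      refine ih.trans (SimpleGraph.Adj.reachable ?_)
      rw [triLattice_adj_iff]
      simp only [Set.mem_insert_iff, Set.mem_singleton_iff, Prod.mk.injEq]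
      omega
  | pred n ih =>
      refine ih.trans (SimpleGraph.Adj.reachable ?_)
      rw [triLattice_adj_iff]
      simp only [Set.mem_insert_iff, Set.mem_singleton_iff, Prod.mk.injEq]
      omega

lemma reach_v (a b m : ℤ) : triLattice.Reachable (a, b) (a, b + m) := by
  induction m using Int.induction_on with
  | zero => rw [add_zero]
  | succ n ih =>
      refine ih.trans (SimpleGraph.Adj.reachable ?_)
      rw [triLattice_adj_iff]
      simp only [Set.mem_insert_iff, Set.mem_singleton_iff, Prod.mk.injEq]
      omega
  | pred n ih =>
      refine ih.trans (SimpleGraph.Adj.reachable ?_)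
      rw [triLattice_adj_iff]
      simp only [Set.mem_insert_iff, Set.mem_singleton_iff, Prod.mk.injEq]
      omega

lemma triLattice_reach (u v : ℤ × ℤ) : triLattice.Reachable u v := by
  have h1 := reach_h u.1 u.2 (v.1 - u.1)
  have h2 := reach_v (u.1 + (v.1 - u.1)) u.2 (v.2 - u.2)
  have := h1.trans h2
  simpa using this

lemma keyz (z : ZMod 7) (hz : z = 3 ∨ z = 5) (d1 d2 : ℤ)
    (b1 : -2 ≤ d1 ∧ d1 ≤ 2) (b2 : -2 ≤ d2 ∧ d2 ≤ 2)
    (b3 : -2 ≤ d1 + d2 ∧ d1 + d2 ≤ 2) (hne : ¬(d1 = 0 ∧ d2 = 0)) :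
    (d1 : ZMod 7) + z * (d2 : ZMod 7) ≠ 0 := by
  obtain ⟨l1, r1⟩ := b1
  obtain ⟨l2, r2⟩ := b2
  rcases hz with rfl | rfl <;>
  interval_cases d1 <;> interval_cases d2 <;> simp_all <;> decide

/-- For `z ∈ {3, 5} ⊆ ZMod 7`, the coloring `ℓ_z` is a nice coloring of the
triangular lattice: distinct vertices at graph distance at most 2 get different colors. -/
theorem linColoring_nice (z : ZMod 7) (hz : z ∈ ({3, 5} : Set (ZMod 7)))
    (u v : ℤ × ℤ) (huv : u ≠ v) (hdist : triLattice.dist u v ≤ 2) :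
    linColoring z u ≠ linColoring z v := by
  have hz' : z = 3 ∨ z = 5 := by simpa using hz
  obtain ⟨p, hp⟩ := (triLattice_reach u v).exists_walk_length_eq_dist
  have hlen : p.length ≤ 2 := by omega
  intro heq
  have h7 : ((v.1 - u.1 : ℤ) : ZMod 7) + z * ((v.2 - u.2 : ℤ) : ZMod 7) = 0 := by
    unfold linColoring at heq
    push_cast
    linear_combination -heq
  have hne : ¬(v.1 - u.1 = 0 ∧ v.2 - u.2 = 0) := by
    rintro ⟨e1, e2⟩
    exact huv (Prod.ext_iff.mpr ⟨by omega, by omega⟩)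
  cases p with
  | nil => exact huv rfl
  | cons h q =>
    cases q with
    | nil =>
      rw [triLattice_adj_iff] at h
      simp only [Set.mem_insert_iff, Set.mem_singleton_iff, Prod.mk.injEq] at h
      exact keyz z hz' _ _ (by omega) (by omega) (by omega) hne h7
    | cons h' q' =>
      cases q' with
      | nil =>
        rw [triLattice_adj_iff] at h h'
        simp only [Set.mem_insert_iff, Set.mem_singleton_iff, Prod.mk.injEq] at h h'
        exact keyz z hz' _ _ (by omega) (by omega) (by omega) hne h7
      | cons h'' q'' => simp at hlen
end

section
/- In any Isbell coloring of the triangular lattice, the ordered pair of colors of two adjacent vertices uniquely determines their difference vector. Precisely: let z ∈ {3, 5} ⊆ ZMod 7 and let π be a bijection of ZMod 7. If v, v' are adjacent in T and w, w' are adjacent in T, and π(ℓ_z(v)) = π(ℓ_z(w)) and π(ℓ_z(v')) = π(ℓ_z(w')), then v' − v = w' − w. -/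
/-- In an Isbell coloring `π ∘ ℓ_z` of the triangular lattice, the ordered pair of colors
of two adjacent vertices uniquely determines their difference vector. -/
theorem isbell_determines_direction (z : ZMod 7) (hz : z ∈ ({3, 5} : Set (ZMod 7)))
    (π : Equiv.Perm (ZMod 7)) (v v' w w' : ℤ × ℤ)
    (hv : triLattice.Adj v v') (hw : triLattice.Adj w w')
    (h1 : π (linColoring z v) = π (linColoring z w))
    (h2 : π (linColoring z v') = π (linColoring z w')) :
    v' - v = w' - w := by
  have e1 := π.injective h1
  have e2 := π.injective h2
  unfold linColoring at e1 e2
  have key : ((v'.1 - v.1 : ℤ) : ZMod 7) + z * ((v'.2 - v.2 : ℤ) : ZMod 7)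
      = ((w'.1 - w.1 : ℤ) : ZMod 7) + z * ((w'.2 - w.2 : ℤ) : ZMod 7) := by
    push_cast
    linear_combination e2 - e1
  have hv' : (v'.1 - v.1, v'.2 - v.2) ∈
      ({(1, 0), (-1, 0), (0, 1), (0, -1), (1, -1), (-1, 1)} : Set (ℤ × ℤ)) := hv
  have hw' : (w'.1 - w.1, w'.2 - w.2) ∈
      ({(1, 0), (-1, 0), (0, 1), (0, -1), (1, -1), (-1, 1)} : Set (ℤ × ℤ)) := hw
  simp only [Set.mem_insert_iff, Set.mem_singleton_iff, Prod.mk.injEq] at hv' hw' hz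
  have goal : v'.1 - v.1 = w'.1 - w.1 ∧ v'.2 - v.2 = w'.2 - w.2 := by
    rcases hz with rfl | rfl <;>
    rcases hv' with ⟨a1, a2⟩ | ⟨a1, a2⟩ | ⟨a1, a2⟩ | ⟨a1, a2⟩ | ⟨a1, a2⟩ | ⟨a1, a2⟩ <;>
    rcases hw' with ⟨b1, b2⟩ | ⟨b1, b2⟩ | ⟨b1, b2⟩ | ⟨b1, b2⟩ | ⟨b1, b2⟩ | ⟨b1, b2⟩ <;>
    rw [a1, a2, b1, b2] at key <;>
    first
      | exact ⟨by omega, by omega⟩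
      | (exfalso; push_cast at key; revert key; decide)
  have := goal
  apply Prod.ext <;> simp [Prod.fst_sub, Prod.snd_sub] <;> omega
end

section
/- An Isbell coloring of the triangular lattice is uniquely determined by its restriction to a hexagon together with one extra vertex. Precisely: let H⁺ = {(0,0), (1,0), (−1,0), (0,1), (0,−1), (1,−1), (−1,1), (2,0)} ⊆ ℤ × ℤ. If z₁, z₂ ∈ {3, 5} ⊆ ZMod 7 and π₁, π₂ are bijections of ZMod 7 such that π₁(ℓ_{z₁}(v)) = π₂(ℓ_{z₂}(v)) for all v ∈ H⁺, then z₁ = z₂ and π₁ = π₂; in particular the two colorings agree on all of ℤ × ℤ. -/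
/-- `H⁺`: the origin, its six neighbours, and one further vertex at distance 2. -/
def hexPlus : Set (ℤ × ℤ) :=
  {(0, 0), (1, 0), (-1, 0), (0, 1), (0, -1), (1, -1), (-1, 1), (2, 0)}

lemma perm_ext_of_seven (π₁ π₂ : Equiv.Perm (ZMod 7))
    (h0 : π₁ 0 = π₂ 0) (h1 : π₁ 1 = π₂ 1) (h2 : π₁ 2 = π₂ 2) (h3 : π₁ 3 = π₂ 3)
    (h4 : π₁ 4 = π₂ 4) (h5 : π₁ 5 = π₂ 5) (h6 : π₁ 6 = π₂ 6) : π₁ = π₂ :=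
  Equiv.ext fun x => by fin_cases x <;> assumption

/-- An Isbell coloring of the triangular lattice is uniquely determined by its restriction
to the hexagon together with one extra vertex: if two Isbell colorings agree on `H⁺`,
then their data coincide, and in particular they agree everywhere. -/
theorem isbell_unique_of_agree_on_hexPlus
    (z₁ z₂ : ZMod 7) (hz₁ : z₁ ∈ ({3, 5} : Set (ZMod 7))) (hz₂ : z₂ ∈ ({3, 5} : Set (ZMod 7)))
    (π₁ π₂ : Equiv.Perm (ZMod 7))
    (hagree : ∀ v ∈ hexPlus, π₁ (linColoring z₁ v) = π₂ (linColoring z₂ v)) :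
    z₁ = z₂ ∧ π₁ = π₂ ∧ ∀ v : ℤ × ℤ, π₁ (linColoring z₁ v) = π₂ (linColoring z₂ v) := by
  have h0 := hagree (0,0) (by simp [hexPlus])
  have h1 := hagree (1,0) (by simp [hexPlus])
  have h2 := hagree (-1,0) (by simp [hexPlus])
  have h3 := hagree (0,1) (by simp [hexPlus])
  have h4 := hagree (0,-1) (by simp [hexPlus])
  have h5 := hagree (1,-1) (by simp [hexPlus])
  have h6 := hagree (-1,1) (by simp [hexPlus])
  have h7 := hagree (2,0) (by simp [hexPlus])
  simp only [linColoring] at h0 h1 h2 h3 h4 h5 h6 h7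
  push_cast at h0 h1 h2 h3 h4 h5 h6 h7
  rcases hz₁ with rfl | rfl <;> rcases hz₂ with rfl | rfl <;>
    norm_num at h0 h1 h2 h3 h4 h5 h6 h7
  · have hπ : π₁ = π₂ := perm_ext_of_seven π₁ π₂ h0 h1 h6 h3
      (by rw [show (4 : ZMod 7) = -3 from by decide]; exact h4)
      (by rw [show (5 : ZMod 7) = -2 from by decide]; exact h5)
      (by rw [show (6 : ZMod 7) = -1 from by decide]; exact h2)
    exact ⟨rfl, hπ, fun v => by rw [hπ]⟩
  · exact absurd (π₂.injective (h7.symm.trans h6)) (by decide)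
  · exact absurd (π₁.injective (h6.trans h7.symm)) (by decide)
  · have hπ : π₁ = π₂ := perm_ext_of_seven π₁ π₂ h0 h1 h7
      (by rw [show (3 : ZMod 7) = -4 from by decide]; exact h5)
      h6 h3
      (by rw [show (6 : ZMod 7) = -1 from by decide]; exact h2)
    exact ⟨rfl, hπ, fun v => by rw [hπ]⟩
end

section
/- A nice 7-coloring of the central hexagon of the triangular lattice extends to a nice 7-coloring of the whole lattice in exactly two ways. Precisely: let H = {(0,0), (1,0), (−1,0), (0,1), (0,−1), (1,−1), (−1,1)} and let h : H → Fin 7 be injective. Then the set of colorings c : ℤ × ℤ → Fin 7 that are nice (any two distinct vertices at graph distance at most 2 in T get different colors) and restrict to h on H has exactly two elements. -/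
/-- `H`: the origin and its six neighbours (the central hexagon). -/
def hexagon : Set (ℤ × ℤ) :=
  {(0, 0), (1, 0), (-1, 0), (0, 1), (0, -1), (1, -1), (-1, 1)}

namespace NiceHex

def rotM (v : ℤ × ℤ) : ℤ × ℤ := (-v.2, v.1 + v.2)


def rot (d : ℤ × ℤ → ZMod 7) : ℤ × ℤ → ZMod 7 := fun v => 5 * d (rotM v)

def InGen (δ : ℤ × ℤ) : Prop :=
  δ = (1,0) ∨ δ = (-1,0) ∨ δ = (0,1) ∨ δ = (0,-1) ∨ δ = (1,-1) ∨ δ = (-1,1)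

def InB2 (δ : ℤ × ℤ) : Prop :=
  δ = (1,0) ∨ δ = (-1,0) ∨ δ = (0,1) ∨ δ = (0,-1) ∨ δ = (1,-1) ∨ δ = (-1,1) ∨
  δ = (2,0) ∨ δ = (-2,0) ∨ δ = (0,2) ∨ δ = (0,-2) ∨ δ = (2,-2) ∨ δ = (-2,2) ∨
  δ = (2,-1) ∨ δ = (-2,1) ∨ δ = (1,-2) ∨ δ = (-1,2) ∨ δ = (1,1) ∨ δ = (-1,-1)

def Nice' (d : ℤ × ℤ → ZMod 7) : Prop :=
  ∀ u v : ℤ × ℤ, InB2 (v.1 - u.1, v.2 - u.2) → d u ≠ d v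

def Hex (d : ℤ × ℤ → ZMod 7) : Prop :=
  d (0,0) = 0 ∧ d (1,0) = 1 ∧ d (-1,0) = 6 ∧ d (0,1) = 3 ∧ d (0,-1) = 4 ∧
  d (1,-1) = 5 ∧ d (-1,1) = 2

def Agree (d : ℤ × ℤ → ZMod 7) : Prop :=
  Hex d ∧ d (2,0) = 2 ∧ d (-2,0) = 5 ∧ d (0,2) = 6 ∧ d (0,-2) = 1 ∧
  d (2,-2) = 3 ∧ d (-2,2) = 4 ∧ d (2,-1) = 6 ∧ d (-2,1) = 1 ∧ d (1,-2) = 2 ∧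
  d (-1,2) = 5 ∧ d (1,1) = 4 ∧ d (-1,-1) = 3

variable {d : ℤ × ℤ → ZMod 7}

lemma nice_ne (hN : Nice' d) (p q : ℤ × ℤ) (hm : InB2 (q.1 - p.1, q.2 - p.2))
    {t : ZMod 7} (hq : d q = t) : d p ≠ t := by
  have := hN p q hm
  rw [hq] at this; exact this

lemma dichotomy (hN : Nice' d) (hH : Hex d) : d (2,-1) = 6 ∨ d (2,-1) = 2 := by
  obtain ⟨h0, h1, hm1, h3, h4, h5, h2⟩ := hH
  have e0 := nice_ne hN (2,-1) (0,0) (by unfold InB2; decide) h0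
  have e1 := nice_ne hN (2,-1) (1,0) (by unfold InB2; decide) h1
  have e3 := nice_ne hN (2,-1) (0,1) (by unfold InB2; decide) h3
  have e4 := nice_ne hN (2,-1) (0,-1) (by unfold InB2; decide) h4
  have e5 := nice_ne hN (2,-1) (1,-1) (by unfold InB2; decide) h5
  have : ∀ t : ZMod 7, (t ≠ 0 ∧ t ≠ 1 ∧ t ≠ 3 ∧ t ≠ 4 ∧ t ≠ 5) → t = 6 ∨ t = 2 := by decide
  exact this _ ⟨e0, e1, e3, e4, e5⟩

lemma caseA (hN : Nice' d) (hH : Hex d) (h6 : d (2,-1) = 6) :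
    d (1,1) = 4 ∧ d (2,0) = 2 := by
  obtain ⟨h0, h1, hm1, h3, h4, h5, h2⟩ := hH
  have a0 := nice_ne hN (1,1) (0,0) (by unfold InB2; decide) h0
  have a1 := nice_ne hN (1,1) (1,0) (by unfold InB2; decide) h1
  have a3 := nice_ne hN (1,1) (0,1) (by unfold InB2; decide) h3
  have a5 := nice_ne hN (1,1) (1,-1) (by unfold InB2; decide) h5
  have a2 := nice_ne hN (1,1) (-1,1) (by unfold InB2; decide) h2
  have a6 := nice_ne hN (1,1) (2,-1) (by unfold InB2; decide) h6
  have h11 : d (1,1) = 4 := by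
    have : ∀ t : ZMod 7, (t ≠ 0 ∧ t ≠ 1 ∧ t ≠ 3 ∧ t ≠ 5 ∧ t ≠ 2 ∧ t ≠ 6) → t = 4 := by decide
    exact this _ ⟨a0, a1, a3, a5, a2, a6⟩
  refine ⟨h11, ?_⟩
  have b0 := nice_ne hN (2,0) (0,0) (by unfold InB2; decide) h0
  have b1 := nice_ne hN (2,0) (1,0) (by unfold InB2; decide) h1
  have b3 := nice_ne hN (2,0) (0,1) (by unfold InB2; decide) h3
  have b5 := nice_ne hN (2,0) (1,-1) (by unfold InB2; decide) h5
  have b6 := nice_ne hN (2,0) (2,-1) (by unfold InB2; decide) h6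
  have b4 := nice_ne hN (2,0) (1,1) (by unfold InB2; decide) h11
  have : ∀ t : ZMod 7, (t ≠ 0 ∧ t ≠ 1 ∧ t ≠ 3 ∧ t ≠ 5 ∧ t ≠ 6 ∧ t ≠ 4) → t = 2 := by decide
  exact this _ ⟨b0, b1, b3, b5, b6, b4⟩

lemma inb2_rot : ∀ δ : ℤ × ℤ, InB2 δ → InB2 (rotM δ) := by
  intro δ h
  rcases h with rfl|rfl|rfl|rfl|rfl|rfl|rfl|rfl|rfl|rfl|rfl|rfl|rfl|rfl|rfl|rfl|rfl|rfl <;>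
    (unfold InB2 rotM; decide)

lemma nice_rot (hN : Nice' d) : Nice' (rot d) := by
  unfold rot
  intro u v hm hEq
  have hm' : InB2 ((rotM v).1 - (rotM u).1, (rotM v).2 - (rotM u).2) := by
    have h2 := inb2_rot _ hm
    have h3 : rotM (v.1 - u.1, v.2 - u.2)
        = ((rotM v).1 - (rotM u).1, (rotM v).2 - (rotM u).2) := by
      simp only [rotM, Prod.mk.injEq]; constructor <;> ring
    rwa [h3] at h2
  have cancel : ∀ x y : ZMod 7, 5*x = 5*y → x = y := by decide
  exact hN (rotM u) (rotM v) hm' (cancel _ _ hEq)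

lemma rot21 : (rot d) (2,-1) = 5 * d (1,1) := by
  show 5 * d (rotM (2,-1)) = 5 * d (1,1)
  rw [show rotM (2,-1) = (1,1) from by decide]

lemma hex_rot (hH : Hex d) : Hex (rot d) := by
  unfold rot
  obtain ⟨h0, h1, hm1, h3, h4, h5, h2⟩ := hH
  refine ⟨?_, ?_, ?_, ?_, ?_, ?_, ?_⟩
  · show 5 * d (rotM (0,0)) = 0
    rw [show rotM (0,0) = (0,0) from by decide, h0]; decide
  · show 5 * d (rotM (1,0)) = 1
    rw [show rotM (1,0) = (0,1) from by decide, h3]; decide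
  · show 5 * d (rotM (-1,0)) = 6
    rw [show rotM (-1,0) = (0,-1) from by decide, h4]; decide
  · show 5 * d (rotM (0,1)) = 3
    rw [show rotM (0,1) = (-1,1) from by decide, h2]; decide
  · show 5 * d (rotM (0,-1)) = 4
    rw [show rotM (0,-1) = (1,-1) from by decide, h5]; decide
  · show 5 * d (rotM (1,-1)) = 5
    rw [show rotM (1,-1) = (1,0) from by decide, h1]; decide
  · show 5 * d (rotM (-1,1)) = 2
    rw [show rotM (-1,1) = (-1,0) from by decide, hm1]; decide

lemma val1 (f : ℤ × ℤ → ZMod 7) {p : ℤ × ℤ} {a : ZMod 7} (h : rot f p = a)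
    (q : ℤ × ℤ) (b : ZMod 7) (hpq : rotM p = q) (hab : 5 * b = a) : f q = b := by
  have h' : 5 * f (rotM p) = a := h
  rw [hpq] at h'
  have cancel : ∀ x y : ZMod 7, 5*x = 5*y → x = y := by decide
  exact cancel _ _ (h'.trans hab.symm)

lemma agree_of_caseA (hN : Nice' d) (hH : Hex d) (h6 : d (2,-1) = 6) : Agree d := by
  obtain ⟨h11, h20⟩ := caseA hN hH h6
  have N1 := nice_rot hN
  have H1 := hex_rot hH
  have C1 : (rot d) (2,-1) = 6 := by rw [rot21, h11]; decide
  obtain ⟨h11a, h20a⟩ := caseA N1 H1 C1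
  have N2 := nice_rot N1
  have H2 := hex_rot H1
  have C2 : (rot (rot d)) (2,-1) = 6 := by rw [rot21, h11a]; decide
  obtain ⟨h11b, h20b⟩ := caseA N2 H2 C2
  have N3 := nice_rot N2
  have H3 := hex_rot H2
  have C3 : (rot (rot (rot d))) (2,-1) = 6 := by rw [rot21, h11b]; decide
  obtain ⟨h11c, h20c⟩ := caseA N3 H3 C3
  have N4 := nice_rot N3
  have H4 := hex_rot H3
  have C4 : (rot (rot (rot (rot d)))) (2,-1) = 6 := by rw [rot21, h11c]; decide
  obtain ⟨h11d, h20d⟩ := caseA N4 H4 C4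
  have N5 := nice_rot N4
  have H5 := hex_rot H4
  have C5 : (rot (rot (rot (rot (rot d))))) (2,-1) = 6 := by rw [rot21, h11d]; decide
  obtain ⟨h11e, h20e⟩ := caseA N5 H5 C5
  have v02 : d (0,2) = 6 := val1 _ h20a _ _ (by decide) (by decide)
  have vm12 : d (-1,2) = 5 := val1 _ h11a _ _ (by decide) (by decide)
  have vm22 : d (-2,2) = 4 :=
    val1 _ (val1 _ h20b (0,2) 6 (by decide) (by decide)) _ _ (by decide) (by decide)
  have vm21 : d (-2,1) = 1 :=
    val1 _ (val1 _ h11b (-1,2) 5 (by decide) (by decide)) _ _ (by decide) (by decide)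
  have vm20 : d (-2,0) = 5 :=
    val1 _ (val1 _ (val1 _ h20c (0,2) 6 (by decide) (by decide)) (-2,2) 4 (by decide)
      (by decide)) _ _ (by decide) (by decide)
  have vm1m1 : d (-1,-1) = 3 :=
    val1 _ (val1 _ (val1 _ h11c (-1,2) 5 (by decide) (by decide)) (-2,1) 1 (by decide)
      (by decide)) _ _ (by decide) (by decide)
  have v0m2 : d (0,-2) = 1 :=
    val1 _ (val1 _ (val1 _ (val1 _ h20d (0,2) 6 (by decide) (by decide)) (-2,2) 4 (by decide)
      (by decide)) (-2,0) 5 (by decide) (by decide)) _ _ (by decide) (by decide)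
  have v1m2 : d (1,-2) = 2 :=
    val1 _ (val1 _ (val1 _ (val1 _ h11d (-1,2) 5 (by decide) (by decide)) (-2,1) 1 (by decide)
      (by decide)) (-1,-1) 3 (by decide) (by decide)) _ _ (by decide) (by decide)
  have v2m2 : d (2,-2) = 3 :=
    val1 _ (val1 _ (val1 _ (val1 _ (val1 _ h20e (0,2) 6 (by decide) (by decide)) (-2,2) 4
      (by decide) (by decide)) (-2,0) 5 (by decide) (by decide)) (0,-2) 1 (by decide)
      (by decide)) _ _ (by decide) (by decide)
  exact ⟨hH, h20, vm20, v02, v0m2, v2m2, vm22, h6, vm21, v1m2, vm12, h11, vm1m1⟩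


def trans (p : ℤ × ℤ) (d : ℤ × ℤ → ZMod 7) : ℤ × ℤ → ZMod 7 :=
  fun w => d (w.1 + p.1, w.2 + p.2) - linColoring 3 p

lemma nice_trans (p : ℤ × ℤ) (hN : Nice' d) : Nice' (trans p d) := by
  intro u v hm hEq
  have hm' : InB2 ((v.1 + p.1) - (u.1 + p.1), (v.2 + p.2) - (u.2 + p.2)) := by
    convert hm using 2 <;> ring
  apply hN (u.1 + p.1, u.2 + p.2) (v.1 + p.1, v.2 + p.2) hm'
  have hEq' : d (u.1 + p.1, u.2 + p.2) - linColoring 3 p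
      = d (v.1 + p.1, v.2 + p.2) - linColoring 3 p := hEq
  exact sub_left_injective hEq'

lemma propag_e1 (hN : Nice' d) (hA : Agree d) :
    d (1,2) = 0 ∧ d (2,1) = 5 ∧ d (3,-1) = 0 ∧ d (3,-2) = 4 ∧ d (3,0) = 3 := by
  obtain ⟨⟨h0, h1, hm1, h3, h4, h5, h2⟩, a20, am20, a02, a0m2, a2m2, am22, a2m1, am21, a1m2, am12, a11, am1m1⟩ := hA
  have e0 := nice_ne hN (1,2) (1,0) (by unfold InB2; decide) h1
  have e1 := nice_ne hN (1,2) (2,0) (by unfold InB2; decide) a20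
  have e2 := nice_ne hN (1,2) (0,1) (by unfold InB2; decide) h3
  have e3 := nice_ne hN (1,2) (1,1) (by unfold InB2; decide) a11
  have e4 := nice_ne hN (1,2) (-1,2) (by unfold InB2; decide) am12
  have e5 := nice_ne hN (1,2) (0,2) (by unfold InB2; decide) a02
  have q0_e1 : d (1,2) = 0 := by
    have key : ∀ t : ZMod 7, (t ≠ 1 ∧ t ≠ 2 ∧ t ≠ 3 ∧ t ≠ 4 ∧ t ≠ 5 ∧ t ≠ 6) → t = 0 := by decide
    exact key _ ⟨e0, e1, e2, e3, e4, e5⟩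
  have e0 := nice_ne hN (2,1) (1,2) (by unfold InB2; decide) q0_e1
  have e1 := nice_ne hN (2,1) (1,0) (by unfold InB2; decide) h1
  have e2 := nice_ne hN (2,1) (2,0) (by unfold InB2; decide) a20
  have e3 := nice_ne hN (2,1) (0,1) (by unfold InB2; decide) h3
  have e4 := nice_ne hN (2,1) (1,1) (by unfold InB2; decide) a11
  have e5 := nice_ne hN (2,1) (2,-1) (by unfold InB2; decide) a2m1
  have q1_e1 : d (2,1) = 5 := by
    have key : ∀ t : ZMod 7, (t ≠ 0 ∧ t ≠ 1 ∧ t ≠ 2 ∧ t ≠ 3 ∧ t ≠ 4 ∧ t ≠ 6) → t = 5 := by decide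
    exact key _ ⟨e0, e1, e2, e3, e4, e5⟩
  have e0 := nice_ne hN (3,-1) (1,0) (by unfold InB2; decide) h1
  have e1 := nice_ne hN (3,-1) (2,0) (by unfold InB2; decide) a20
  have e2 := nice_ne hN (3,-1) (2,-2) (by unfold InB2; decide) a2m2
  have e3 := nice_ne hN (3,-1) (1,1) (by unfold InB2; decide) a11
  have e4 := nice_ne hN (3,-1) (2,1) (by unfold InB2; decide) q1_e1
  have e5 := nice_ne hN (3,-1) (2,-1) (by unfold InB2; decide) a2m1
  have q2_e1 : d (3,-1) = 0 := by
    have key : ∀ t : ZMod 7, (t ≠ 1 ∧ t ≠ 2 ∧ t ≠ 3 ∧ t ≠ 4 ∧ t ≠ 5 ∧ t ≠ 6) → t = 0 := by decide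
    exact key _ ⟨e0, e1, e2, e3, e4, e5⟩
  have e0 := nice_ne hN (3,-2) (3,-1) (by unfold InB2; decide) q2_e1
  have e1 := nice_ne hN (3,-2) (1,0) (by unfold InB2; decide) h1
  have e2 := nice_ne hN (3,-2) (1,-2) (by unfold InB2; decide) a1m2
  have e3 := nice_ne hN (3,-2) (2,-2) (by unfold InB2; decide) a2m2
  have e4 := nice_ne hN (3,-2) (1,-1) (by unfold InB2; decide) h5
  have e5 := nice_ne hN (3,-2) (2,-1) (by unfold InB2; decide) a2m1
  have q3_e1 : d (3,-2) = 4 := by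
    have key : ∀ t : ZMod 7, (t ≠ 0 ∧ t ≠ 1 ∧ t ≠ 2 ∧ t ≠ 3 ∧ t ≠ 5 ∧ t ≠ 6) → t = 4 := by decide
    exact key _ ⟨e0, e1, e2, e3, e4, e5⟩
  have e0 := nice_ne hN (3,0) (3,-1) (by unfold InB2; decide) q2_e1
  have e1 := nice_ne hN (3,0) (1,0) (by unfold InB2; decide) h1
  have e2 := nice_ne hN (3,0) (2,0) (by unfold InB2; decide) a20
  have e3 := nice_ne hN (3,0) (3,-2) (by unfold InB2; decide) q3_e1
  have e4 := nice_ne hN (3,0) (2,1) (by unfold InB2; decide) q1_e1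
  have e5 := nice_ne hN (3,0) (2,-1) (by unfold InB2; decide) a2m1
  have q4_e1 : d (3,0) = 3 := by
    have key : ∀ t : ZMod 7, (t ≠ 0 ∧ t ≠ 1 ∧ t ≠ 2 ∧ t ≠ 4 ∧ t ≠ 5 ∧ t ≠ 6) → t = 3 := by decide
    exact key _ ⟨e0, e1, e2, e3, e4, e5⟩
  exact ⟨q0_e1, q1_e1, q2_e1, q3_e1, q4_e1⟩

lemma agree_trans_e1 (hN : Nice' d) (hA : Agree d) : Agree (trans (1,0) d) := by
  obtain ⟨p0x, p1x, p2x, p3x, p4x⟩ := propag_e1 hN hA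
  obtain ⟨⟨h0, h1, hm1, h3, h4, h5, h2⟩, a20, am20, a02, a0m2, a2m2, am22, a2m1, am21, a1m2, am12, a11, am1m1⟩ := hA
  refine ⟨⟨?_, ?_, ?_, ?_, ?_, ?_, ?_⟩, ?_, ?_, ?_, ?_, ?_, ?_, ?_, ?_, ?_, ?_, ?_, ?_⟩
  · show d (0+1, 0+0) - linColoring 3 (1,0) = 0
    rw [show ((0+1 : ℤ), (0+0 : ℤ)) = ((1:ℤ), (0:ℤ)) from by decide, h1]
    decide
  · show d (1+1, 0+0) - linColoring 3 (1,0) = 1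
    rw [show ((1+1 : ℤ), (0+0 : ℤ)) = ((2:ℤ), (0:ℤ)) from by decide, a20]
    decide
  · show d (-1+1, 0+0) - linColoring 3 (1,0) = 6
    rw [show ((-1+1 : ℤ), (0+0 : ℤ)) = ((0:ℤ), (0:ℤ)) from by decide, h0]
    decide
  · show d (0+1, 1+0) - linColoring 3 (1,0) = 3
    rw [show ((0+1 : ℤ), (1+0 : ℤ)) = ((1:ℤ), (1:ℤ)) from by decide, a11]
    decide
  · show d (0+1, -1+0) - linColoring 3 (1,0) = 4
    rw [show ((0+1 : ℤ), (-1+0 : ℤ)) = ((1:ℤ), (-1:ℤ)) from by decide, h5]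
    decide
  · show d (1+1, -1+0) - linColoring 3 (1,0) = 5
    rw [show ((1+1 : ℤ), (-1+0 : ℤ)) = ((2:ℤ), (-1:ℤ)) from by decide, a2m1]
    decide
  · show d (-1+1, 1+0) - linColoring 3 (1,0) = 2
    rw [show ((-1+1 : ℤ), (1+0 : ℤ)) = ((0:ℤ), (1:ℤ)) from by decide, h3]
    decide
  · show d (2+1, 0+0) - linColoring 3 (1,0) = 2
    rw [show ((2+1 : ℤ), (0+0 : ℤ)) = ((3:ℤ), (0:ℤ)) from by decide, p4x]
    decide
  · show d (-2+1, 0+0) - linColoring 3 (1,0) = 5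
    rw [show ((-2+1 : ℤ), (0+0 : ℤ)) = ((-1:ℤ), (0:ℤ)) from by decide, hm1]
    decide
  · show d (0+1, 2+0) - linColoring 3 (1,0) = 6
    rw [show ((0+1 : ℤ), (2+0 : ℤ)) = ((1:ℤ), (2:ℤ)) from by decide, p0x]
    decide
  · show d (0+1, -2+0) - linColoring 3 (1,0) = 1
    rw [show ((0+1 : ℤ), (-2+0 : ℤ)) = ((1:ℤ), (-2:ℤ)) from by decide, a1m2]
    decide
  · show d (2+1, -2+0) - linColoring 3 (1,0) = 3
    rw [show ((2+1 : ℤ), (-2+0 : ℤ)) = ((3:ℤ), (-2:ℤ)) from by decide, p3x]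
    decide
  · show d (-2+1, 2+0) - linColoring 3 (1,0) = 4
    rw [show ((-2+1 : ℤ), (2+0 : ℤ)) = ((-1:ℤ), (2:ℤ)) from by decide, am12]
    decide
  · show d (2+1, -1+0) - linColoring 3 (1,0) = 6
    rw [show ((2+1 : ℤ), (-1+0 : ℤ)) = ((3:ℤ), (-1:ℤ)) from by decide, p2x]
    decide
  · show d (-2+1, 1+0) - linColoring 3 (1,0) = 1
    rw [show ((-2+1 : ℤ), (1+0 : ℤ)) = ((-1:ℤ), (1:ℤ)) from by decide, h2]
    decide
  · show d (1+1, -2+0) - linColoring 3 (1,0) = 2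
    rw [show ((1+1 : ℤ), (-2+0 : ℤ)) = ((2:ℤ), (-2:ℤ)) from by decide, a2m2]
    decide
  · show d (-1+1, 2+0) - linColoring 3 (1,0) = 5
    rw [show ((-1+1 : ℤ), (2+0 : ℤ)) = ((0:ℤ), (2:ℤ)) from by decide, a02]
    decide
  · show d (1+1, 1+0) - linColoring 3 (1,0) = 4
    rw [show ((1+1 : ℤ), (1+0 : ℤ)) = ((2:ℤ), (1:ℤ)) from by decide, p1x]
    decide
  · show d (-1+1, -1+0) - linColoring 3 (1,0) = 3
    rw [show ((-1+1 : ℤ), (-1+0 : ℤ)) = ((0:ℤ), (-1:ℤ)) from by decide, h4]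
    decide


lemma propag_me1 (hN : Nice' d) (hA : Agree d) :
    d (-3,1) = 0 ∧ d (-3,2) = 3 ∧ d (-2,-1) = 2 ∧ d (-3,0) = 4 ∧ d (-1,-2) = 0 := by
  obtain ⟨⟨h0, h1, hm1, h3, h4, h5, h2⟩, a20, am20, a02, a0m2, a2m2, am22, a2m1, am21, a1m2, am12, a11, am1m1⟩ := hA
  have e0 := nice_ne hN (-3,1) (-2,1) (by unfold InB2; decide) am21
  have e1 := nice_ne hN (-3,1) (-1,1) (by unfold InB2; decide) h2
  have e2 := nice_ne hN (-3,1) (-1,-1) (by unfold InB2; decide) am1m1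
  have e3 := nice_ne hN (-3,1) (-2,2) (by unfold InB2; decide) am22
  have e4 := nice_ne hN (-3,1) (-2,0) (by unfold InB2; decide) am20
  have e5 := nice_ne hN (-3,1) (-1,0) (by unfold InB2; decide) hm1
  have q0_me1 : d (-3,1) = 0 := by
    have key : ∀ t : ZMod 7, (t ≠ 1 ∧ t ≠ 2 ∧ t ≠ 3 ∧ t ≠ 4 ∧ t ≠ 5 ∧ t ≠ 6) → t = 0 := by decide
    exact key _ ⟨e0, e1, e2, e3, e4, e5⟩
  have e0 := nice_ne hN (-3,2) (-3,1) (by unfold InB2; decide) q0_me1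
  have e1 := nice_ne hN (-3,2) (-2,1) (by unfold InB2; decide) am21
  have e2 := nice_ne hN (-3,2) (-1,1) (by unfold InB2; decide) h2
  have e3 := nice_ne hN (-3,2) (-2,2) (by unfold InB2; decide) am22
  have e4 := nice_ne hN (-3,2) (-1,2) (by unfold InB2; decide) am12
  have e5 := nice_ne hN (-3,2) (-1,0) (by unfold InB2; decide) hm1
  have q1_me1 : d (-3,2) = 3 := by
    have key : ∀ t : ZMod 7, (t ≠ 0 ∧ t ≠ 1 ∧ t ≠ 2 ∧ t ≠ 4 ∧ t ≠ 5 ∧ t ≠ 6) → t = 3 := by decide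
    exact key _ ⟨e0, e1, e2, e3, e4, e5⟩
  have e0 := nice_ne hN (-2,-1) (-3,1) (by unfold InB2; decide) q0_me1
  have e1 := nice_ne hN (-2,-1) (-2,1) (by unfold InB2; decide) am21
  have e2 := nice_ne hN (-2,-1) (-1,-1) (by unfold InB2; decide) am1m1
  have e3 := nice_ne hN (-2,-1) (0,-1) (by unfold InB2; decide) h4
  have e4 := nice_ne hN (-2,-1) (-2,0) (by unfold InB2; decide) am20
  have e5 := nice_ne hN (-2,-1) (-1,0) (by unfold InB2; decide) hm1
  have q2_me1 : d (-2,-1) = 2 := by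
    have key : ∀ t : ZMod 7, (t ≠ 0 ∧ t ≠ 1 ∧ t ≠ 3 ∧ t ≠ 4 ∧ t ≠ 5 ∧ t ≠ 6) → t = 2 := by decide
    exact key _ ⟨e0, e1, e2, e3, e4, e5⟩
  have e0 := nice_ne hN (-3,0) (-3,1) (by unfold InB2; decide) q0_me1
  have e1 := nice_ne hN (-3,0) (-2,1) (by unfold InB2; decide) am21
  have e2 := nice_ne hN (-3,0) (-2,-1) (by unfold InB2; decide) q2_me1
  have e3 := nice_ne hN (-3,0) (-3,2) (by unfold InB2; decide) q1_me1
  have e4 := nice_ne hN (-3,0) (-2,0) (by unfold InB2; decide) am20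
  have e5 := nice_ne hN (-3,0) (-1,0) (by unfold InB2; decide) hm1
  have q3_me1 : d (-3,0) = 4 := by
    have key : ∀ t : ZMod 7, (t ≠ 0 ∧ t ≠ 1 ∧ t ≠ 2 ∧ t ≠ 3 ∧ t ≠ 5 ∧ t ≠ 6) → t = 4 := by decide
    exact key _ ⟨e0, e1, e2, e3, e4, e5⟩
  have e0 := nice_ne hN (-1,-2) (0,-2) (by unfold InB2; decide) a0m2
  have e1 := nice_ne hN (-1,-2) (-2,-1) (by unfold InB2; decide) q2_me1
  have e2 := nice_ne hN (-1,-2) (-1,-1) (by unfold InB2; decide) am1m1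
  have e3 := nice_ne hN (-1,-2) (-3,0) (by unfold InB2; decide) q3_me1
  have e4 := nice_ne hN (-1,-2) (-2,0) (by unfold InB2; decide) am20
  have e5 := nice_ne hN (-1,-2) (-1,0) (by unfold InB2; decide) hm1
  have q4_me1 : d (-1,-2) = 0 := by
    have key : ∀ t : ZMod 7, (t ≠ 1 ∧ t ≠ 2 ∧ t ≠ 3 ∧ t ≠ 4 ∧ t ≠ 5 ∧ t ≠ 6) → t = 0 := by decide
    exact key _ ⟨e0, e1, e2, e3, e4, e5⟩
  exact ⟨q0_me1, q1_me1, q2_me1, q3_me1, q4_me1⟩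

lemma agree_trans_me1 (hN : Nice' d) (hA : Agree d) : Agree (trans (-1,0) d) := by
  obtain ⟨p0x, p1x, p2x, p3x, p4x⟩ := propag_me1 hN hA
  obtain ⟨⟨h0, h1, hm1, h3, h4, h5, h2⟩, a20, am20, a02, a0m2, a2m2, am22, a2m1, am21, a1m2, am12, a11, am1m1⟩ := hA
  refine ⟨⟨?_, ?_, ?_, ?_, ?_, ?_, ?_⟩, ?_, ?_, ?_, ?_, ?_, ?_, ?_, ?_, ?_, ?_, ?_, ?_⟩
  · show d (0+-1, 0+0) - linColoring 3 (-1,0) = 0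
    rw [show ((0+-1 : ℤ), (0+0 : ℤ)) = ((-1:ℤ), (0:ℤ)) from by decide, hm1]
    decide
  · show d (1+-1, 0+0) - linColoring 3 (-1,0) = 1
    rw [show ((1+-1 : ℤ), (0+0 : ℤ)) = ((0:ℤ), (0:ℤ)) from by decide, h0]
    decide
  · show d (-1+-1, 0+0) - linColoring 3 (-1,0) = 6
    rw [show ((-1+-1 : ℤ), (0+0 : ℤ)) = ((-2:ℤ), (0:ℤ)) from by decide, am20]
    decide
  · show d (0+-1, 1+0) - linColoring 3 (-1,0) = 3
    rw [show ((0+-1 : ℤ), (1+0 : ℤ)) = ((-1:ℤ), (1:ℤ)) from by decide, h2]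
    decide
  · show d (0+-1, -1+0) - linColoring 3 (-1,0) = 4
    rw [show ((0+-1 : ℤ), (-1+0 : ℤ)) = ((-1:ℤ), (-1:ℤ)) from by decide, am1m1]
    decide
  · show d (1+-1, -1+0) - linColoring 3 (-1,0) = 5
    rw [show ((1+-1 : ℤ), (-1+0 : ℤ)) = ((0:ℤ), (-1:ℤ)) from by decide, h4]
    decide
  · show d (-1+-1, 1+0) - linColoring 3 (-1,0) = 2
    rw [show ((-1+-1 : ℤ), (1+0 : ℤ)) = ((-2:ℤ), (1:ℤ)) from by decide, am21]
    decide
  · show d (2+-1, 0+0) - linColoring 3 (-1,0) = 2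
    rw [show ((2+-1 : ℤ), (0+0 : ℤ)) = ((1:ℤ), (0:ℤ)) from by decide, h1]
    decide
  · show d (-2+-1, 0+0) - linColoring 3 (-1,0) = 5
    rw [show ((-2+-1 : ℤ), (0+0 : ℤ)) = ((-3:ℤ), (0:ℤ)) from by decide, p3x]
    decide
  · show d (0+-1, 2+0) - linColoring 3 (-1,0) = 6
    rw [show ((0+-1 : ℤ), (2+0 : ℤ)) = ((-1:ℤ), (2:ℤ)) from by decide, am12]
    decide
  · show d (0+-1, -2+0) - linColoring 3 (-1,0) = 1
    rw [show ((0+-1 : ℤ), (-2+0 : ℤ)) = ((-1:ℤ), (-2:ℤ)) from by decide, p4x]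
    decide
  · show d (2+-1, -2+0) - linColoring 3 (-1,0) = 3
    rw [show ((2+-1 : ℤ), (-2+0 : ℤ)) = ((1:ℤ), (-2:ℤ)) from by decide, a1m2]
    decide
  · show d (-2+-1, 2+0) - linColoring 3 (-1,0) = 4
    rw [show ((-2+-1 : ℤ), (2+0 : ℤ)) = ((-3:ℤ), (2:ℤ)) from by decide, p1x]
    decide
  · show d (2+-1, -1+0) - linColoring 3 (-1,0) = 6
    rw [show ((2+-1 : ℤ), (-1+0 : ℤ)) = ((1:ℤ), (-1:ℤ)) from by decide, h5]
    decide
  · show d (-2+-1, 1+0) - linColoring 3 (-1,0) = 1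
    rw [show ((-2+-1 : ℤ), (1+0 : ℤ)) = ((-3:ℤ), (1:ℤ)) from by decide, p0x]
    decide
  · show d (1+-1, -2+0) - linColoring 3 (-1,0) = 2
    rw [show ((1+-1 : ℤ), (-2+0 : ℤ)) = ((0:ℤ), (-2:ℤ)) from by decide, a0m2]
    decide
  · show d (-1+-1, 2+0) - linColoring 3 (-1,0) = 5
    rw [show ((-1+-1 : ℤ), (2+0 : ℤ)) = ((-2:ℤ), (2:ℤ)) from by decide, am22]
    decide
  · show d (1+-1, 1+0) - linColoring 3 (-1,0) = 4
    rw [show ((1+-1 : ℤ), (1+0 : ℤ)) = ((0:ℤ), (1:ℤ)) from by decide, h3]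
    decide
  · show d (-1+-1, -1+0) - linColoring 3 (-1,0) = 3
    rw [show ((-1+-1 : ℤ), (-1+0 : ℤ)) = ((-2:ℤ), (-1:ℤ)) from by decide, p2x]
    decide


lemma propag_e2 (hN : Nice' d) (hA : Agree d) :
    d (-2,3) = 0 ∧ d (-1,3) = 1 ∧ d (0,3) = 2 ∧ d (1,2) = 0 ∧ d (2,1) = 5 := by
  obtain ⟨⟨h0, h1, hm1, h3, h4, h5, h2⟩, a20, am20, a02, a0m2, a2m2, am22, a2m1, am21, a1m2, am12, a11, am1m1⟩ := hA
  have e0 := nice_ne hN (-2,3) (-2,1) (by unfold InB2; decide) am21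
  have e1 := nice_ne hN (-2,3) (-1,1) (by unfold InB2; decide) h2
  have e2 := nice_ne hN (-2,3) (0,1) (by unfold InB2; decide) h3
  have e3 := nice_ne hN (-2,3) (-2,2) (by unfold InB2; decide) am22
  have e4 := nice_ne hN (-2,3) (-1,2) (by unfold InB2; decide) am12
  have e5 := nice_ne hN (-2,3) (0,2) (by unfold InB2; decide) a02
  have q0_e2 : d (-2,3) = 0 := by
    have key : ∀ t : ZMod 7, (t ≠ 1 ∧ t ≠ 2 ∧ t ≠ 3 ∧ t ≠ 4 ∧ t ≠ 5 ∧ t ≠ 6) → t = 0 := by decide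
    exact key _ ⟨e0, e1, e2, e3, e4, e5⟩
  have e0 := nice_ne hN (-1,3) (-2,3) (by unfold InB2; decide) q0_e2
  have e1 := nice_ne hN (-1,3) (-1,1) (by unfold InB2; decide) h2
  have e2 := nice_ne hN (-1,3) (0,1) (by unfold InB2; decide) h3
  have e3 := nice_ne hN (-1,3) (1,1) (by unfold InB2; decide) a11
  have e4 := nice_ne hN (-1,3) (-1,2) (by unfold InB2; decide) am12
  have e5 := nice_ne hN (-1,3) (0,2) (by unfold InB2; decide) a02
  have q1_e2 : d (-1,3) = 1 := by
    have key : ∀ t : ZMod 7, (t ≠ 0 ∧ t ≠ 2 ∧ t ≠ 3 ∧ t ≠ 4 ∧ t ≠ 5 ∧ t ≠ 6) → t = 1 := by decide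
    exact key _ ⟨e0, e1, e2, e3, e4, e5⟩
  have e0 := nice_ne hN (0,3) (-2,3) (by unfold InB2; decide) q0_e2
  have e1 := nice_ne hN (0,3) (-1,3) (by unfold InB2; decide) q1_e2
  have e2 := nice_ne hN (0,3) (0,1) (by unfold InB2; decide) h3
  have e3 := nice_ne hN (0,3) (1,1) (by unfold InB2; decide) a11
  have e4 := nice_ne hN (0,3) (-1,2) (by unfold InB2; decide) am12
  have e5 := nice_ne hN (0,3) (0,2) (by unfold InB2; decide) a02
  have q2_e2 : d (0,3) = 2 := by
    have key : ∀ t : ZMod 7, (t ≠ 0 ∧ t ≠ 1 ∧ t ≠ 3 ∧ t ≠ 4 ∧ t ≠ 5 ∧ t ≠ 6) → t = 2 := by decide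
    exact key _ ⟨e0, e1, e2, e3, e4, e5⟩
  have e0 := nice_ne hN (1,2) (-1,3) (by unfold InB2; decide) q1_e2
  have e1 := nice_ne hN (1,2) (0,3) (by unfold InB2; decide) q2_e2
  have e2 := nice_ne hN (1,2) (0,1) (by unfold InB2; decide) h3
  have e3 := nice_ne hN (1,2) (1,1) (by unfold InB2; decide) a11
  have e4 := nice_ne hN (1,2) (-1,2) (by unfold InB2; decide) am12
  have e5 := nice_ne hN (1,2) (0,2) (by unfold InB2; decide) a02
  have q3_e2 : d (1,2) = 0 := by
    have key : ∀ t : ZMod 7, (t ≠ 1 ∧ t ≠ 2 ∧ t ≠ 3 ∧ t ≠ 4 ∧ t ≠ 5 ∧ t ≠ 6) → t = 0 := by decide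
    exact key _ ⟨e0, e1, e2, e3, e4, e5⟩
  have e0 := nice_ne hN (2,1) (1,2) (by unfold InB2; decide) q3_e2
  have e1 := nice_ne hN (2,1) (1,0) (by unfold InB2; decide) h1
  have e2 := nice_ne hN (2,1) (0,3) (by unfold InB2; decide) q2_e2
  have e3 := nice_ne hN (2,1) (0,1) (by unfold InB2; decide) h3
  have e4 := nice_ne hN (2,1) (1,1) (by unfold InB2; decide) a11
  have e5 := nice_ne hN (2,1) (2,-1) (by unfold InB2; decide) a2m1
  have q4_e2 : d (2,1) = 5 := by
    have key : ∀ t : ZMod 7, (t ≠ 0 ∧ t ≠ 1 ∧ t ≠ 2 ∧ t ≠ 3 ∧ t ≠ 4 ∧ t ≠ 6) → t = 5 := by decide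
    exact key _ ⟨e0, e1, e2, e3, e4, e5⟩
  exact ⟨q0_e2, q1_e2, q2_e2, q3_e2, q4_e2⟩

lemma agree_trans_e2 (hN : Nice' d) (hA : Agree d) : Agree (trans (0,1) d) := by
  obtain ⟨p0x, p1x, p2x, p3x, p4x⟩ := propag_e2 hN hA
  obtain ⟨⟨h0, h1, hm1, h3, h4, h5, h2⟩, a20, am20, a02, a0m2, a2m2, am22, a2m1, am21, a1m2, am12, a11, am1m1⟩ := hA
  refine ⟨⟨?_, ?_, ?_, ?_, ?_, ?_, ?_⟩, ?_, ?_, ?_, ?_, ?_, ?_, ?_, ?_, ?_, ?_, ?_, ?_⟩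
  · show d (0+0, 0+1) - linColoring 3 (0,1) = 0
    rw [show ((0+0 : ℤ), (0+1 : ℤ)) = ((0:ℤ), (1:ℤ)) from by decide, h3]
    decide
  · show d (1+0, 0+1) - linColoring 3 (0,1) = 1
    rw [show ((1+0 : ℤ), (0+1 : ℤ)) = ((1:ℤ), (1:ℤ)) from by decide, a11]
    decide
  · show d (-1+0, 0+1) - linColoring 3 (0,1) = 6
    rw [show ((-1+0 : ℤ), (0+1 : ℤ)) = ((-1:ℤ), (1:ℤ)) from by decide, h2]
    decide
  · show d (0+0, 1+1) - linColoring 3 (0,1) = 3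
    rw [show ((0+0 : ℤ), (1+1 : ℤ)) = ((0:ℤ), (2:ℤ)) from by decide, a02]
    decide
  · show d (0+0, -1+1) - linColoring 3 (0,1) = 4
    rw [show ((0+0 : ℤ), (-1+1 : ℤ)) = ((0:ℤ), (0:ℤ)) from by decide, h0]
    decide
  · show d (1+0, -1+1) - linColoring 3 (0,1) = 5
    rw [show ((1+0 : ℤ), (-1+1 : ℤ)) = ((1:ℤ), (0:ℤ)) from by decide, h1]
    decide
  · show d (-1+0, 1+1) - linColoring 3 (0,1) = 2
    rw [show ((-1+0 : ℤ), (1+1 : ℤ)) = ((-1:ℤ), (2:ℤ)) from by decide, am12]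
    decide
  · show d (2+0, 0+1) - linColoring 3 (0,1) = 2
    rw [show ((2+0 : ℤ), (0+1 : ℤ)) = ((2:ℤ), (1:ℤ)) from by decide, p4x]
    decide
  · show d (-2+0, 0+1) - linColoring 3 (0,1) = 5
    rw [show ((-2+0 : ℤ), (0+1 : ℤ)) = ((-2:ℤ), (1:ℤ)) from by decide, am21]
    decide
  · show d (0+0, 2+1) - linColoring 3 (0,1) = 6
    rw [show ((0+0 : ℤ), (2+1 : ℤ)) = ((0:ℤ), (3:ℤ)) from by decide, p2x]
    decide
  · show d (0+0, -2+1) - linColoring 3 (0,1) = 1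
    rw [show ((0+0 : ℤ), (-2+1 : ℤ)) = ((0:ℤ), (-1:ℤ)) from by decide, h4]
    decide
  · show d (2+0, -2+1) - linColoring 3 (0,1) = 3
    rw [show ((2+0 : ℤ), (-2+1 : ℤ)) = ((2:ℤ), (-1:ℤ)) from by decide, a2m1]
    decide
  · show d (-2+0, 2+1) - linColoring 3 (0,1) = 4
    rw [show ((-2+0 : ℤ), (2+1 : ℤ)) = ((-2:ℤ), (3:ℤ)) from by decide, p0x]
    decide
  · show d (2+0, -1+1) - linColoring 3 (0,1) = 6
    rw [show ((2+0 : ℤ), (-1+1 : ℤ)) = ((2:ℤ), (0:ℤ)) from by decide, a20]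
    decide
  · show d (-2+0, 1+1) - linColoring 3 (0,1) = 1
    rw [show ((-2+0 : ℤ), (1+1 : ℤ)) = ((-2:ℤ), (2:ℤ)) from by decide, am22]
    decide
  · show d (1+0, -2+1) - linColoring 3 (0,1) = 2
    rw [show ((1+0 : ℤ), (-2+1 : ℤ)) = ((1:ℤ), (-1:ℤ)) from by decide, h5]
    decide
  · show d (-1+0, 2+1) - linColoring 3 (0,1) = 5
    rw [show ((-1+0 : ℤ), (2+1 : ℤ)) = ((-1:ℤ), (3:ℤ)) from by decide, p1x]
    decide
  · show d (1+0, 1+1) - linColoring 3 (0,1) = 4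
    rw [show ((1+0 : ℤ), (1+1 : ℤ)) = ((1:ℤ), (2:ℤ)) from by decide, p3x]
    decide
  · show d (-1+0, -1+1) - linColoring 3 (0,1) = 3
    rw [show ((-1+0 : ℤ), (-1+1 : ℤ)) = ((-1:ℤ), (0:ℤ)) from by decide, hm1]
    decide


lemma propag_me2 (hN : Nice' d) (hA : Agree d) :
    d (-1,-2) = 0 ∧ d (-2,-1) = 2 ∧ d (1,-3) = 6 ∧ d (0,-3) = 5 ∧ d (2,-3) = 0 := by
  obtain ⟨⟨h0, h1, hm1, h3, h4, h5, h2⟩, a20, am20, a02, a0m2, a2m2, am22, a2m1, am21, a1m2, am12, a11, am1m1⟩ := hA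
  have e0 := nice_ne hN (-1,-2) (0,-2) (by unfold InB2; decide) a0m2
  have e1 := nice_ne hN (-1,-2) (1,-2) (by unfold InB2; decide) a1m2
  have e2 := nice_ne hN (-1,-2) (-1,-1) (by unfold InB2; decide) am1m1
  have e3 := nice_ne hN (-1,-2) (0,-1) (by unfold InB2; decide) h4
  have e4 := nice_ne hN (-1,-2) (-2,0) (by unfold InB2; decide) am20
  have e5 := nice_ne hN (-1,-2) (-1,0) (by unfold InB2; decide) hm1
  have q0_me2 : d (-1,-2) = 0 := by
    have key : ∀ t : ZMod 7, (t ≠ 1 ∧ t ≠ 2 ∧ t ≠ 3 ∧ t ≠ 4 ∧ t ≠ 5 ∧ t ≠ 6) → t = 0 := by decide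
    exact key _ ⟨e0, e1, e2, e3, e4, e5⟩
  have e0 := nice_ne hN (-2,-1) (-1,-2) (by unfold InB2; decide) q0_me2
  have e1 := nice_ne hN (-2,-1) (-2,1) (by unfold InB2; decide) am21
  have e2 := nice_ne hN (-2,-1) (-1,-1) (by unfold InB2; decide) am1m1
  have e3 := nice_ne hN (-2,-1) (0,-1) (by unfold InB2; decide) h4
  have e4 := nice_ne hN (-2,-1) (-2,0) (by unfold InB2; decide) am20
  have e5 := nice_ne hN (-2,-1) (-1,0) (by unfold InB2; decide) hm1
  have q1_me2 : d (-2,-1) = 2 := by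
    have key : ∀ t : ZMod 7, (t ≠ 0 ∧ t ≠ 1 ∧ t ≠ 3 ∧ t ≠ 4 ∧ t ≠ 5 ∧ t ≠ 6) → t = 2 := by decide
    exact key _ ⟨e0, e1, e2, e3, e4, e5⟩
  have e0 := nice_ne hN (1,-3) (-1,-2) (by unfold InB2; decide) q0_me2
  have e1 := nice_ne hN (1,-3) (0,-2) (by unfold InB2; decide) a0m2
  have e2 := nice_ne hN (1,-3) (1,-2) (by unfold InB2; decide) a1m2
  have e3 := nice_ne hN (1,-3) (-1,-1) (by unfold InB2; decide) am1m1
  have e4 := nice_ne hN (1,-3) (0,-1) (by unfold InB2; decide) h4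
  have e5 := nice_ne hN (1,-3) (1,-1) (by unfold InB2; decide) h5
  have q2_me2 : d (1,-3) = 6 := by
    have key : ∀ t : ZMod 7, (t ≠ 0 ∧ t ≠ 1 ∧ t ≠ 2 ∧ t ≠ 3 ∧ t ≠ 4 ∧ t ≠ 5) → t = 6 := by decide
    exact key _ ⟨e0, e1, e2, e3, e4, e5⟩
  have e0 := nice_ne hN (0,-3) (-1,-2) (by unfold InB2; decide) q0_me2
  have e1 := nice_ne hN (0,-3) (0,-2) (by unfold InB2; decide) a0m2
  have e2 := nice_ne hN (0,-3) (-2,-1) (by unfold InB2; decide) q1_me2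
  have e3 := nice_ne hN (0,-3) (-1,-1) (by unfold InB2; decide) am1m1
  have e4 := nice_ne hN (0,-3) (0,-1) (by unfold InB2; decide) h4
  have e5 := nice_ne hN (0,-3) (1,-3) (by unfold InB2; decide) q2_me2
  have q3_me2 : d (0,-3) = 5 := by
    have key : ∀ t : ZMod 7, (t ≠ 0 ∧ t ≠ 1 ∧ t ≠ 2 ∧ t ≠ 3 ∧ t ≠ 4 ∧ t ≠ 6) → t = 5 := by decide
    exact key _ ⟨e0, e1, e2, e3, e4, e5⟩
  have e0 := nice_ne hN (2,-3) (0,-2) (by unfold InB2; decide) a0m2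
  have e1 := nice_ne hN (2,-3) (1,-2) (by unfold InB2; decide) a1m2
  have e2 := nice_ne hN (2,-3) (2,-2) (by unfold InB2; decide) a2m2
  have e3 := nice_ne hN (2,-3) (0,-1) (by unfold InB2; decide) h4
  have e4 := nice_ne hN (2,-3) (0,-3) (by unfold InB2; decide) q3_me2
  have e5 := nice_ne hN (2,-3) (1,-3) (by unfold InB2; decide) q2_me2
  have q4_me2 : d (2,-3) = 0 := by
    have key : ∀ t : ZMod 7, (t ≠ 1 ∧ t ≠ 2 ∧ t ≠ 3 ∧ t ≠ 4 ∧ t ≠ 5 ∧ t ≠ 6) → t = 0 := by decide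
    exact key _ ⟨e0, e1, e2, e3, e4, e5⟩
  exact ⟨q0_me2, q1_me2, q2_me2, q3_me2, q4_me2⟩

lemma agree_trans_me2 (hN : Nice' d) (hA : Agree d) : Agree (trans (0,-1) d) := by
  obtain ⟨p0x, p1x, p2x, p3x, p4x⟩ := propag_me2 hN hA
  obtain ⟨⟨h0, h1, hm1, h3, h4, h5, h2⟩, a20, am20, a02, a0m2, a2m2, am22, a2m1, am21, a1m2, am12, a11, am1m1⟩ := hA
  refine ⟨⟨?_, ?_, ?_, ?_, ?_, ?_, ?_⟩, ?_, ?_, ?_, ?_, ?_, ?_, ?_, ?_, ?_, ?_, ?_, ?_⟩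
  · show d (0+0, 0+-1) - linColoring 3 (0,-1) = 0
    rw [show ((0+0 : ℤ), (0+-1 : ℤ)) = ((0:ℤ), (-1:ℤ)) from by decide, h4]
    decide
  · show d (1+0, 0+-1) - linColoring 3 (0,-1) = 1
    rw [show ((1+0 : ℤ), (0+-1 : ℤ)) = ((1:ℤ), (-1:ℤ)) from by decide, h5]
    decide
  · show d (-1+0, 0+-1) - linColoring 3 (0,-1) = 6
    rw [show ((-1+0 : ℤ), (0+-1 : ℤ)) = ((-1:ℤ), (-1:ℤ)) from by decide, am1m1]
    decide
  · show d (0+0, 1+-1) - linColoring 3 (0,-1) = 3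
    rw [show ((0+0 : ℤ), (1+-1 : ℤ)) = ((0:ℤ), (0:ℤ)) from by decide, h0]
    decide
  · show d (0+0, -1+-1) - linColoring 3 (0,-1) = 4
    rw [show ((0+0 : ℤ), (-1+-1 : ℤ)) = ((0:ℤ), (-2:ℤ)) from by decide, a0m2]
    decide
  · show d (1+0, -1+-1) - linColoring 3 (0,-1) = 5
    rw [show ((1+0 : ℤ), (-1+-1 : ℤ)) = ((1:ℤ), (-2:ℤ)) from by decide, a1m2]
    decide
  · show d (-1+0, 1+-1) - linColoring 3 (0,-1) = 2
    rw [show ((-1+0 : ℤ), (1+-1 : ℤ)) = ((-1:ℤ), (0:ℤ)) from by decide, hm1]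
    decide
  · show d (2+0, 0+-1) - linColoring 3 (0,-1) = 2
    rw [show ((2+0 : ℤ), (0+-1 : ℤ)) = ((2:ℤ), (-1:ℤ)) from by decide, a2m1]
    decide
  · show d (-2+0, 0+-1) - linColoring 3 (0,-1) = 5
    rw [show ((-2+0 : ℤ), (0+-1 : ℤ)) = ((-2:ℤ), (-1:ℤ)) from by decide, p1x]
    decide
  · show d (0+0, 2+-1) - linColoring 3 (0,-1) = 6
    rw [show ((0+0 : ℤ), (2+-1 : ℤ)) = ((0:ℤ), (1:ℤ)) from by decide, h3]
    decide
  · show d (0+0, -2+-1) - linColoring 3 (0,-1) = 1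
    rw [show ((0+0 : ℤ), (-2+-1 : ℤ)) = ((0:ℤ), (-3:ℤ)) from by decide, p3x]
    decide
  · show d (2+0, -2+-1) - linColoring 3 (0,-1) = 3
    rw [show ((2+0 : ℤ), (-2+-1 : ℤ)) = ((2:ℤ), (-3:ℤ)) from by decide, p4x]
    decide
  · show d (-2+0, 2+-1) - linColoring 3 (0,-1) = 4
    rw [show ((-2+0 : ℤ), (2+-1 : ℤ)) = ((-2:ℤ), (1:ℤ)) from by decide, am21]
    decide
  · show d (2+0, -1+-1) - linColoring 3 (0,-1) = 6
    rw [show ((2+0 : ℤ), (-1+-1 : ℤ)) = ((2:ℤ), (-2:ℤ)) from by decide, a2m2]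
    decide
  · show d (-2+0, 1+-1) - linColoring 3 (0,-1) = 1
    rw [show ((-2+0 : ℤ), (1+-1 : ℤ)) = ((-2:ℤ), (0:ℤ)) from by decide, am20]
    decide
  · show d (1+0, -2+-1) - linColoring 3 (0,-1) = 2
    rw [show ((1+0 : ℤ), (-2+-1 : ℤ)) = ((1:ℤ), (-3:ℤ)) from by decide, p2x]
    decide
  · show d (-1+0, 2+-1) - linColoring 3 (0,-1) = 5
    rw [show ((-1+0 : ℤ), (2+-1 : ℤ)) = ((-1:ℤ), (1:ℤ)) from by decide, h2]
    decide
  · show d (1+0, 1+-1) - linColoring 3 (0,-1) = 4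
    rw [show ((1+0 : ℤ), (1+-1 : ℤ)) = ((1:ℤ), (0:ℤ)) from by decide, h1]
    decide
  · show d (-1+0, -1+-1) - linColoring 3 (0,-1) = 3
    rw [show ((-1+0 : ℤ), (-1+-1 : ℤ)) = ((-1:ℤ), (-2:ℤ)) from by decide, p0x]
    decide


lemma trans_zero (d : ℤ × ℤ → ZMod 7) : trans (0,0) d = d := by
  funext w
  show d (w.1 + 0, w.2 + 0) - linColoring 3 (0,0) = d w
  rw [show ((w.1 + 0 : ℤ), (w.2 + 0 : ℤ)) = (w.1, w.2) from by simp,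
    show linColoring 3 (0,0) = 0 from by decide]
  simp

lemma trans_add (p g : ℤ × ℤ) (d : ℤ × ℤ → ZMod 7) :
    trans (p.1 + g.1, p.2 + g.2) d = trans g (trans p d) := by
  funext w
  show d (w.1 + (p.1 + g.1), w.2 + (p.2 + g.2)) - linColoring 3 (p.1 + g.1, p.2 + g.2)
      = d ((w.1 + g.1) + p.1, (w.2 + g.2) + p.2) - linColoring 3 p - linColoring 3 g
  rw [show ((w.1 + (p.1 + g.1) : ℤ), (w.2 + (p.2 + g.2) : ℤ))
      = ((w.1 + g.1) + p.1, (w.2 + g.2) + p.2) from by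
    simp only [Prod.mk.injEq]; constructor <;> ring]
  have hl : linColoring 3 (p.1 + g.1, p.2 + g.2) = linColoring 3 p + linColoring 3 g := by
    unfold linColoring; push_cast; ring
  rw [hl]; ring

lemma agree_all (hN : Nice' d) (hA : Agree d) : ∀ p : ℤ × ℤ, Agree (trans p d) := by
  have row : ∀ x : ℤ, Agree (trans (x, 0) d) := by
    intro x
    induction x using Int.induction_on with
    | zero => rw [trans_zero]; exact hA
    | succ n ih =>
        have h2 := agree_trans_e1 (nice_trans _ hN) ih
        have he : trans ((n : ℤ) + 1, 0) d = trans (1,0) (trans ((n : ℤ), 0) d) := by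
          have := trans_add ((n : ℤ), 0) (1, 0) d
          simpa using this
        rw [he]; exact h2
    | pred n ih =>
        have h2 := agree_trans_me1 (nice_trans _ hN) ih
        have he : trans (-(n : ℤ) - 1, 0) d = trans (-1,0) (trans (-(n : ℤ), 0) d) := by
          have := trans_add (-(n : ℤ), 0) (-1, 0) d
          simpa [sub_eq_add_neg] using this
        rw [he]; exact h2
  intro p
  obtain ⟨x, y⟩ := p
  induction y using Int.induction_on with
  | zero => exact row x
  | succ n ih =>
      have h2 := agree_trans_e2 (nice_trans _ hN) ih
      have he : trans (x, (n : ℤ) + 1) d = trans (0,1) (trans (x, (n : ℤ)) d) := by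
        have := trans_add (x, (n : ℤ)) (0, 1) d
        simpa using this
      rw [he]; exact h2
  | pred n ih =>
      have h2 := agree_trans_me2 (nice_trans _ hN) ih
      have he : trans (x, -(n : ℤ) - 1) d = trans (0,-1) (trans (x, -(n : ℤ)) d) := by
        have := trans_add (x, -(n : ℤ)) (0, -1) d
        simpa [sub_eq_add_neg] using this
      rw [he]; exact h2

lemma eq_lin_of_caseA (hN : Nice' d) (hH : Hex d) (h6 : d (2,-1) = 6) :
    ∀ v, d v = linColoring 3 v := by
  have hA := agree_of_caseA hN hH h6
  intro v
  have h := (agree_all hN hA v).1.1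
  have h' : d (0 + v.1, 0 + v.2) - linColoring 3 v = 0 := h
  rw [show ((0 : ℤ) + v.1, (0 : ℤ) + v.2) = (v.1, v.2) from by simp] at h'
  have := sub_eq_zero.mp h'
  simpa using this

lemma caseB11 (hN : Nice' d) (hH : Hex d) (hc : d (2,-1) = 2) : d (1,1) = 6 := by
  obtain ⟨h0, h1, hm1, h3, h4, h5, h2⟩ := hH
  have a0 := nice_ne hN (1,1) (0,0) (by unfold InB2; decide) h0
  have a1 := nice_ne hN (1,1) (1,0) (by unfold InB2; decide) h1
  have a3 := nice_ne hN (1,1) (0,1) (by unfold InB2; decide) h3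
  have a5 := nice_ne hN (1,1) (1,-1) (by unfold InB2; decide) h5
  have a2 := nice_ne hN (1,1) (-1,1) (by unfold InB2; decide) h2
  have opts : d (1,1) = 4 ∨ d (1,1) = 6 := by
    have key : ∀ t : ZMod 7, (t ≠ 0 ∧ t ≠ 1 ∧ t ≠ 3 ∧ t ≠ 5 ∧ t ≠ 2) → t = 4 ∨ t = 6 := by
      decide
    exact key _ ⟨a0, a1, a3, a5, a2⟩
  rcases opts with h4' | h6'
  · exfalso
    have N1 := nice_rot hN
    have H1 := hex_rot ⟨h0, h1, hm1, h3, h4, h5, h2⟩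
    have C1 : (rot d) (2,-1) = 6 := by rw [rot21, h4']; decide
    have hlin := eq_lin_of_caseA N1 H1 C1 (1,-2)
    have hval : (5 : ZMod 7) * d (2,-1) = linColoring 3 (1,-2) := by
      have h' : 5 * d (rotM (1,-2)) = linColoring 3 (1,-2) := hlin
      rwa [show rotM (1,-2) = (2,-1) from by decide] at h'
    rw [hc, show linColoring 3 (1,-2) = 2 from by decide] at hval
    exact absurd hval (by decide)
  · exact h6'

lemma nice_mirror (hN : Nice' d) : Nice' (fun v => 3 * (d (v.2, v.1))^5) := by
  have swap_mem : ∀ δ : ℤ × ℤ, InB2 δ → InB2 (δ.2, δ.1) := by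
    intro δ h
    rcases h with rfl|rfl|rfl|rfl|rfl|rfl|rfl|rfl|rfl|rfl|rfl|rfl|rfl|rfl|rfl|rfl|rfl|rfl <;>
      (unfold InB2; decide)
  intro u v hm hEq
  have hm' : InB2 (v.2 - u.2, v.1 - u.1) := swap_mem _ hm
  have cancel : ∀ x y : ZMod 7, 3 * x^5 = 3 * y^5 → x = y := by decide
  exact hN (u.2, u.1) (v.2, v.1) hm' (cancel _ _ hEq)

lemma hex_mirror (hH : Hex d) : Hex (fun v => 3 * (d (v.2, v.1))^5) := by
  obtain ⟨h0, h1, hm1, h3, h4, h5, h2⟩ := hH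
  refine ⟨?_, ?_, ?_, ?_, ?_, ?_, ?_⟩
  · show 3 * (d (0,0))^5 = 0
    rw [h0]; decide
  · show 3 * (d (0,1))^5 = 1
    rw [h3]; decide
  · show 3 * (d (0,-1))^5 = 6
    rw [h4]; decide
  · show 3 * (d (1,0))^5 = 3
    rw [h1]; decide
  · show 3 * (d (-1,0))^5 = 4
    rw [hm1]; decide
  · show 3 * (d (-1,1))^5 = 5
    rw [h2]; decide
  · show 3 * (d (1,-1))^5 = 2
    rw [h5]; decide

lemma eq_g2_of_caseB (hN : Nice' d) (hH : Hex d) (hc : d (2,-1) = 2) :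
    ∀ v, d v = (linColoring 5 v)^5 := by
  have h11 := caseB11 hN hH hc
  have N1 := nice_rot hN
  have H1 := hex_rot hH
  have C1 : (rot d) (2,-1) = 2 := by rw [rot21, h11]; decide
  have h11' := caseB11 N1 H1 C1
  have hm12 : d (-1,2) = 4 := by
    have h' : 5 * d (rotM (1,1)) = 6 := h11'
    rw [show rotM (1,1) = (-1,2) from by decide] at h'
    have key : ∀ x : ZMod 7, 5 * x = 6 → x = 4 := by decide
    exact key _ h'
  have Ne := nice_mirror hN
  have He := hex_mirror hH
  have Ce : (fun v : ℤ × ℤ => 3 * (d (v.2, v.1))^5) (2,-1) = 6 := by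
    show 3 * (d (-1,2))^5 = 6
    rw [hm12]; decide
  have hlin := eq_lin_of_caseA Ne He Ce
  intro v
  have h' : 3 * (d (v.1, v.2))^5 = linColoring 3 (v.2, v.1) := hlin (v.2, v.1)
  have h'' : 3 * (d (v.1, v.2))^5 = (v.2 : ZMod 7) + 3 * (v.1 : ZMod 7) := h'
  have key : ∀ x a b : ZMod 7, 3 * x^5 = b + 3 * a → x = (a + 5 * b)^5 := by decide
  have := key _ _ _ h''
  exact this

lemma master (hN : Nice' d) (hH : Hex d) :
    (∀ v, d v = linColoring 3 v) ∨ (∀ v, d v = (linColoring 5 v)^5) := by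
  rcases dichotomy hN hH with h6 | h2
  · exact Or.inl (eq_lin_of_caseA hN hH h6)
  · exact Or.inr (eq_g2_of_caseB hN hH h2)


/-! ### Bridge with graph distance -/

lemma adj_iff {u v : ℤ × ℤ} : triLattice.Adj u v ↔ InGen (v.1 - u.1, v.2 - u.2) := by
  show (v.1 - u.1, v.2 - u.2) ∈
      ({(1, 0), (-1, 0), (0, 1), (0, -1), (1, -1), (-1, 1)} : Set (ℤ × ℤ)) ↔ _
  simp only [Set.mem_insert_iff, Set.mem_singleton_iff, InGen]

lemma adj_of_ingen {u v : ℤ × ℤ} (h : InGen (v.1 - u.1, v.2 - u.2)) : triLattice.Adj u v :=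
  adj_iff.mpr h

lemma dist_le_one_of_adj {u v : ℤ × ℤ} (h : triLattice.Adj u v) : triLattice.dist u v ≤ 2 := by
  have := triLattice.dist_le h.toWalk
  simp only [SimpleGraph.Adj.toWalk, SimpleGraph.Walk.length_cons,
    SimpleGraph.Walk.length_nil] at this
  omega

lemma dist_le_two_of_adj2 {u m v : ℤ × ℤ} (h1 : triLattice.Adj u m) (h2 : triLattice.Adj m v) :
    triLattice.dist u v ≤ 2 := by
  have := triLattice.dist_le (SimpleGraph.Walk.cons h1 h2.toWalk)
  simp only [SimpleGraph.Adj.toWalk, SimpleGraph.Walk.length_cons,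
    SimpleGraph.Walk.length_nil] at this
  omega

lemma dist_le_two_of_inb2 {u v : ℤ × ℤ} (hm : InB2 (v.1 - u.1, v.2 - u.2)) :
    triLattice.dist u v ≤ 2 := by
  rcases hm with h|h|h|h|h|h|h|h|h|h|h|h|h|h|h|h|h|h <;> rw [Prod.mk.injEq] at h
  · exact dist_le_one_of_adj (adj_of_ingen (by unfold InGen; simp only [Prod.mk.injEq]; omega))
  · exact dist_le_one_of_adj (adj_of_ingen (by unfold InGen; simp only [Prod.mk.injEq]; omega))
  · exact dist_le_one_of_adj (adj_of_ingen (by unfold InGen; simp only [Prod.mk.injEq]; omega))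
  · exact dist_le_one_of_adj (adj_of_ingen (by unfold InGen; simp only [Prod.mk.injEq]; omega))
  · exact dist_le_one_of_adj (adj_of_ingen (by unfold InGen; simp only [Prod.mk.injEq]; omega))
  · exact dist_le_one_of_adj (adj_of_ingen (by unfold InGen; simp only [Prod.mk.injEq]; omega))
  · exact dist_le_two_of_adj2 (m := (u.1 + 1, u.2))
      (adj_of_ingen (by unfold InGen; simp only [Prod.mk.injEq]; omega))
      (adj_of_ingen (by unfold InGen; simp only [Prod.mk.injEq]; omega))
  · exact dist_le_two_of_adj2 (m := (u.1 - 1, u.2))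
      (adj_of_ingen (by unfold InGen; simp only [Prod.mk.injEq]; omega))
      (adj_of_ingen (by unfold InGen; simp only [Prod.mk.injEq]; omega))
  · exact dist_le_two_of_adj2 (m := (u.1, u.2 + 1))
      (adj_of_ingen (by unfold InGen; simp only [Prod.mk.injEq]; omega))
      (adj_of_ingen (by unfold InGen; simp only [Prod.mk.injEq]; omega))
  · exact dist_le_two_of_adj2 (m := (u.1, u.2 - 1))
      (adj_of_ingen (by unfold InGen; simp only [Prod.mk.injEq]; omega))
      (adj_of_ingen (by unfold InGen; simp only [Prod.mk.injEq]; omega))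
  · exact dist_le_two_of_adj2 (m := (u.1 + 1, u.2 - 1))
      (adj_of_ingen (by unfold InGen; simp only [Prod.mk.injEq]; omega))
      (adj_of_ingen (by unfold InGen; simp only [Prod.mk.injEq]; omega))
  · exact dist_le_two_of_adj2 (m := (u.1 - 1, u.2 + 1))
      (adj_of_ingen (by unfold InGen; simp only [Prod.mk.injEq]; omega))
      (adj_of_ingen (by unfold InGen; simp only [Prod.mk.injEq]; omega))
  · exact dist_le_two_of_adj2 (m := (u.1 + 1, u.2))
      (adj_of_ingen (by unfold InGen; simp only [Prod.mk.injEq]; omega))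
      (adj_of_ingen (by unfold InGen; simp only [Prod.mk.injEq]; omega))
  · exact dist_le_two_of_adj2 (m := (u.1 - 1, u.2))
      (adj_of_ingen (by unfold InGen; simp only [Prod.mk.injEq]; omega))
      (adj_of_ingen (by unfold InGen; simp only [Prod.mk.injEq]; omega))
  · exact dist_le_two_of_adj2 (m := (u.1, u.2 - 1))
      (adj_of_ingen (by unfold InGen; simp only [Prod.mk.injEq]; omega))
      (adj_of_ingen (by unfold InGen; simp only [Prod.mk.injEq]; omega))
  · exact dist_le_two_of_adj2 (m := (u.1, u.2 + 1))
      (adj_of_ingen (by unfold InGen; simp only [Prod.mk.injEq]; omega))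
      (adj_of_ingen (by unfold InGen; simp only [Prod.mk.injEq]; omega))
  · exact dist_le_two_of_adj2 (m := (u.1 + 1, u.2))
      (adj_of_ingen (by unfold InGen; simp only [Prod.mk.injEq]; omega))
      (adj_of_ingen (by unfold InGen; simp only [Prod.mk.injEq]; omega))
  · exact dist_le_two_of_adj2 (m := (u.1 - 1, u.2))
      (adj_of_ingen (by unfold InGen; simp only [Prod.mk.injEq]; omega))
      (adj_of_ingen (by unfold InGen; simp only [Prod.mk.injEq]; omega))

lemma reach_horiz : ∀ (x : ℤ) (u : ℤ × ℤ), triLattice.Reachable u (u.1 + x, u.2) := by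
  intro x
  induction x using Int.induction_on with
  | zero => intro u; rw [show ((u.1 + (0:ℤ), u.2)) = u from by simp]
  | succ n ih =>
      intro u
      refine (ih u).trans (adj_of_ingen ?_).reachable
      unfold InGen; simp only [Prod.mk.injEq]; omega
  | pred n ih =>
      intro u
      refine (ih u).trans (adj_of_ingen ?_).reachable
      unfold InGen; simp only [Prod.mk.injEq]; omega

lemma reach_vert : ∀ (y : ℤ) (u : ℤ × ℤ), triLattice.Reachable u (u.1, u.2 + y) := by
  intro y
  induction y using Int.induction_on with
  | zero => intro u; rw [show ((u.1, u.2 + (0:ℤ))) = u from by simp]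
  | succ n ih =>
      intro u
      refine (ih u).trans (adj_of_ingen ?_).reachable
      unfold InGen; simp only [Prod.mk.injEq]; omega
  | pred n ih =>
      intro u
      refine (ih u).trans (adj_of_ingen ?_).reachable
      unfold InGen; simp only [Prod.mk.injEq]; omega

lemma reach (u v : ℤ × ℤ) : triLattice.Reachable u v := by
  have h1 := reach_horiz (v.1 - u.1) u
  have h2 := reach_vert (v.2 - u.2) (u.1 + (v.1 - u.1), u.2)
  have h3 := h1.trans h2
  rwa [show ((u.1 + (v.1 - u.1), u.2).1, (u.1 + (v.1 - u.1), u.2).2 + (v.2 - u.2)) = v from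
    Prod.ext (by simp) (by simp)] at h3

lemma ingen_sum {a b : ℤ × ℤ} (ha : InGen a) (hb : InGen b) :
    (a.1 + b.1, a.2 + b.2) = ((0 : ℤ), (0 : ℤ)) ∨ InB2 (a.1 + b.1, a.2 + b.2) := by
  rcases ha with rfl|rfl|rfl|rfl|rfl|rfl <;> rcases hb with rfl|rfl|rfl|rfl|rfl|rfl <;>
    first
      | (left; decide)
      | (right; unfold InB2; decide)

lemma inb2_of_dist {u v : ℤ × ℤ} (hne : u ≠ v) (hd : triLattice.dist u v ≤ 2) :
    InB2 (v.1 - u.1, v.2 - u.2) := by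
  obtain ⟨p, hp⟩ := (reach u v).exists_walk_length_eq_dist
  rw [← hp] at hd
  cases p with
  | nil => exact absurd rfl hne
  | cons h1 q =>
    rename_i a
    cases q with
    | nil =>
        have hg := adj_iff.mp h1
        rcases hg with h|h|h|h|h|h <;> (unfold InB2; tauto)
    | cons h2 r =>
      cases r with
      | nil =>
          have hg1 := adj_iff.mp h1
          have hg2 := adj_iff.mp h2
          rcases ingen_sum hg1 hg2 with h0 | hok
          · exfalso
            rw [Prod.mk.injEq] at h0
            apply hne
            have e1 : u.1 = v.1 := by omega
            have e2 : u.2 = v.2 := by omega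
            exact Prod.ext e1 e2
          · have harg : ((a.1 - u.1) + (v.1 - a.1), (a.2 - u.2) + (v.2 - a.2))
                = (v.1 - u.1, v.2 - u.2) := by
              simp only [Prod.mk.injEq]; omega
            rwa [harg] at hok
      | cons h3 s =>
          exfalso
          simp only [SimpleGraph.Walk.length_cons] at hd
          omega


/-! ### The two linear colorings are nice -/

lemma lin3_ne {u v : ℤ × ℤ} (hm : InB2 (v.1 - u.1, v.2 - u.2)) :
    linColoring 3 u ≠ linColoring 3 v := by
  intro hEq
  have hd : ((v.1 - u.1 : ℤ) : ZMod 7) + 3 * ((v.2 - u.2 : ℤ) : ZMod 7) = 0 := by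
    have h0 : linColoring 3 v - linColoring 3 u = 0 := by rw [hEq]; ring
    unfold linColoring at h0
    push_cast
    linear_combination h0
  rcases hm with h|h|h|h|h|h|h|h|h|h|h|h|h|h|h|h|h|h <;>
    (rw [Prod.mk.injEq] at h; rw [h.1, h.2] at hd; revert hd; decide)

lemma lin5_ne {u v : ℤ × ℤ} (hm : InB2 (v.1 - u.1, v.2 - u.2)) :
    (linColoring 5 u)^5 ≠ (linColoring 5 v)^5 := by
  intro hEq5
  have hEq : linColoring 5 u = linColoring 5 v := by
    have key : ∀ x y : ZMod 7, x^5 = y^5 → x = y := by decide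
    exact key _ _ hEq5
  have hd : ((v.1 - u.1 : ℤ) : ZMod 7) + 5 * ((v.2 - u.2 : ℤ) : ZMod 7) = 0 := by
    have h0 : linColoring 5 v - linColoring 5 u = 0 := by rw [hEq]; ring
    unfold linColoring at h0
    push_cast
    linear_combination h0
  rcases hm with h|h|h|h|h|h|h|h|h|h|h|h|h|h|h|h|h|h <;>
    (rw [Prod.mk.injEq] at h; rw [h.1, h.2] at hd; revert hd; decide)

/-! ### Base points of the hexagon, indexed by their `ℓ₃`-colour -/

def ptF (t : ZMod 7) : ℤ × ℤ :=
  if t = 0 then (0,0) else if t = 1 then (1,0) else if t = 2 then (-1,1)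
  else if t = 3 then (0,1) else if t = 4 then (0,-1) else if t = 5 then (1,-1) else (-1,0)

lemma ptF_mem (t : ZMod 7) : ptF t ∈ hexagon := by
  have key : ∀ t : ZMod 7, ptF t = (0,0) ∨ ptF t = (1,0) ∨ ptF t = (-1,0) ∨ ptF t = (0,1) ∨
      ptF t = (0,-1) ∨ ptF t = (1,-1) ∨ ptF t = (-1,1) := by decide
  rcases key t with h|h|h|h|h|h|h <;> rw [h] <;> (unfold hexagon; simp)

lemma ptF_inj : ∀ a b : ZMod 7, ptF a = ptF b → a = b := by decide


lemma ne_of_inb2 {u v : ℤ × ℤ} (hm : InB2 (v.1 - u.1, v.2 - u.2)) : u ≠ v := by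
  intro huv; subst huv
  rcases hm with h|h|h|h|h|h|h|h|h|h|h|h|h|h|h|h|h|h <;> (rw [Prod.mk.injEq] at h; omega)

end NiceHex

/-- A nice 7-coloring of the central hexagon of the triangular lattice extends to a nice
7-coloring of the whole lattice in exactly two ways. -/
theorem nice_extension_of_hexagon_coloring (h : ℤ × ℤ → Fin 7)
    (hinj : Set.InjOn h hexagon) :
    ∃ c₁ c₂ : ℤ × ℤ → Fin 7, c₁ ≠ c₂ ∧
      {c : ℤ × ℤ → Fin 7 |
        (∀ u v : ℤ × ℤ, u ≠ v → triLattice.dist u v ≤ 2 → c u ≠ c v) ∧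
        ∀ v ∈ hexagon, c v = h v} = {c₁, c₂} := by
  classical
  set σ : ZMod 7 → Fin 7 := fun t => h (NiceHex.ptF t) with hσ
  have hσinj : Function.Injective σ := fun a b hab =>
    NiceHex.ptF_inj a b (hinj (NiceHex.ptF_mem a) (NiceHex.ptF_mem b) hab)
  have hσbij : Function.Bijective σ := by
    rw [Fintype.bijective_iff_injective_and_card]
    exact ⟨hσinj, by simp [ZMod.card]⟩
  set e := Equiv.ofBijective σ hσbij with he
  refine ⟨fun v => e (linColoring 3 v), fun v => e ((linColoring 5 v)^5), ?_, ?_⟩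
  · intro hEq
    have h1 : e (linColoring 3 (2,-1)) = e ((linColoring 5 (2,-1))^5) := congrFun hEq (2,-1)
    rw [show linColoring 3 (2,-1) = 6 from by decide,
        show (linColoring 5 (2,-1))^5 = 2 from by decide] at h1
    have := e.injective h1
    exact absurd this (by decide)
  · ext c
    simp only [Set.mem_setOf_eq, Set.mem_insert_iff, Set.mem_singleton_iff]
    constructor
    · rintro ⟨hn, hext⟩
      have hN : NiceHex.Nice' (fun v => e.symm (c v)) := by
        intro u v hm hEq
        exact hn u v (NiceHex.ne_of_inb2 hm) (NiceHex.dist_le_two_of_inb2 hm)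
          (e.symm.injective hEq)
      have hH : NiceHex.Hex (fun v => e.symm (c v)) := by
        refine ⟨?_, ?_, ?_, ?_, ?_, ?_, ?_⟩
        · show e.symm (c (0,0)) = 0
          rw [hext (0,0) (by unfold hexagon; simp),
            show ((0:ℤ),(0:ℤ)) = NiceHex.ptF 0 from by decide]
          exact e.symm_apply_apply 0
        · show e.symm (c (1,0)) = 1
          rw [hext (1,0) (by unfold hexagon; simp),
            show ((1:ℤ),(0:ℤ)) = NiceHex.ptF 1 from by decide]
          exact e.symm_apply_apply 1
        · show e.symm (c (-1,0)) = 6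
          rw [hext (-1,0) (by unfold hexagon; simp),
            show ((-1:ℤ),(0:ℤ)) = NiceHex.ptF 6 from by decide]
          exact e.symm_apply_apply 6
        · show e.symm (c (0,1)) = 3
          rw [hext (0,1) (by unfold hexagon; simp),
            show ((0:ℤ),(1:ℤ)) = NiceHex.ptF 3 from by decide]
          exact e.symm_apply_apply 3
        · show e.symm (c (0,-1)) = 4
          rw [hext (0,-1) (by unfold hexagon; simp),
            show ((0:ℤ),(-1:ℤ)) = NiceHex.ptF 4 from by decide]
          exact e.symm_apply_apply 4
        · show e.symm (c (1,-1)) = 5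
          rw [hext (1,-1) (by unfold hexagon; simp),
            show ((1:ℤ),(-1:ℤ)) = NiceHex.ptF 5 from by decide]
          exact e.symm_apply_apply 5
        · show e.symm (c (-1,1)) = 2
          rw [hext (-1,1) (by unfold hexagon; simp),
            show ((-1:ℤ),(1:ℤ)) = NiceHex.ptF 2 from by decide]
          exact e.symm_apply_apply 2
      rcases NiceHex.master hN hH with hlin | hlin
      · left; funext v
        have hv : e.symm (c v) = linColoring 3 v := hlin v
        rw [← hv]
        exact (e.apply_symm_apply (c v)).symm
      · right; funext v
        have hv : e.symm (c v) = (linColoring 5 v)^5 := hlin v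
        rw [← hv]
        exact (e.apply_symm_apply (c v)).symm
    · intro hc
      rcases hc with rfl | rfl
      · constructor
        · intro u v hne hd hEq
          exact NiceHex.lin3_ne (NiceHex.inb2_of_dist hne hd) (e.injective hEq)
        · intro v hv
          simp only [hexagon, Set.mem_insert_iff, Set.mem_singleton_iff] at hv
          rcases hv with rfl|rfl|rfl|rfl|rfl|rfl|rfl
          · show e (linColoring 3 ((0:ℤ),(0:ℤ))) = h (0,0)
            rw [show linColoring 3 ((0:ℤ),(0:ℤ)) = 0 from by decide]
            show h (NiceHex.ptF 0) = h (0,0)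
            rw [show NiceHex.ptF 0 = ((0:ℤ),(0:ℤ)) from by decide]
          · show e (linColoring 3 ((1:ℤ),(0:ℤ))) = h (1,0)
            rw [show linColoring 3 ((1:ℤ),(0:ℤ)) = 1 from by decide]
            show h (NiceHex.ptF 1) = h (1,0)
            rw [show NiceHex.ptF 1 = ((1:ℤ),(0:ℤ)) from by decide]
          · show e (linColoring 3 ((-1:ℤ),(0:ℤ))) = h (-1,0)
            rw [show linColoring 3 ((-1:ℤ),(0:ℤ)) = 6 from by decide]
            show h (NiceHex.ptF 6) = h (-1,0)
            rw [show NiceHex.ptF 6 = ((-1:ℤ),(0:ℤ)) from by decide]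
          · show e (linColoring 3 ((0:ℤ),(1:ℤ))) = h (0,1)
            rw [show linColoring 3 ((0:ℤ),(1:ℤ)) = 3 from by decide]
            show h (NiceHex.ptF 3) = h (0,1)
            rw [show NiceHex.ptF 3 = ((0:ℤ),(1:ℤ)) from by decide]
          · show e (linColoring 3 ((0:ℤ),(-1:ℤ))) = h (0,-1)
            rw [show linColoring 3 ((0:ℤ),(-1:ℤ)) = 4 from by decide]
            show h (NiceHex.ptF 4) = h (0,-1)
            rw [show NiceHex.ptF 4 = ((0:ℤ),(-1:ℤ)) from by decide]
          · show e (linColoring 3 ((1:ℤ),(-1:ℤ))) = h (1,-1)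
            rw [show linColoring 3 ((1:ℤ),(-1:ℤ)) = 5 from by decide]
            show h (NiceHex.ptF 5) = h (1,-1)
            rw [show NiceHex.ptF 5 = ((1:ℤ),(-1:ℤ)) from by decide]
          · show e (linColoring 3 ((-1:ℤ),(1:ℤ))) = h (-1,1)
            rw [show linColoring 3 ((-1:ℤ),(1:ℤ)) = 2 from by decide]
            show h (NiceHex.ptF 2) = h (-1,1)
            rw [show NiceHex.ptF 2 = ((-1:ℤ),(1:ℤ)) from by decide]
      · constructor
        · intro u v hne hd hEq
          exact NiceHex.lin5_ne (NiceHex.inb2_of_dist hne hd) (e.injective hEq)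
        · intro v hv
          simp only [hexagon, Set.mem_insert_iff, Set.mem_singleton_iff] at hv
          rcases hv with rfl|rfl|rfl|rfl|rfl|rfl|rfl
          · show e ((linColoring 5 ((0:ℤ),(0:ℤ)))^5) = h (0,0)
            rw [show (linColoring 5 ((0:ℤ),(0:ℤ)))^5 = 0 from by decide]
            show h (NiceHex.ptF 0) = h (0,0)
            rw [show NiceHex.ptF 0 = ((0:ℤ),(0:ℤ)) from by decide]
          · show e ((linColoring 5 ((1:ℤ),(0:ℤ)))^5) = h (1,0)
            rw [show (linColoring 5 ((1:ℤ),(0:ℤ)))^5 = 1 from by decide]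
            show h (NiceHex.ptF 1) = h (1,0)
            rw [show NiceHex.ptF 1 = ((1:ℤ),(0:ℤ)) from by decide]
          · show e ((linColoring 5 ((-1:ℤ),(0:ℤ)))^5) = h (-1,0)
            rw [show (linColoring 5 ((-1:ℤ),(0:ℤ)))^5 = 6 from by decide]
            show h (NiceHex.ptF 6) = h (-1,0)
            rw [show NiceHex.ptF 6 = ((-1:ℤ),(0:ℤ)) from by decide]
          · show e ((linColoring 5 ((0:ℤ),(1:ℤ)))^5) = h (0,1)
            rw [show (linColoring 5 ((0:ℤ),(1:ℤ)))^5 = 3 from by decide]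
            show h (NiceHex.ptF 3) = h (0,1)
            rw [show NiceHex.ptF 3 = ((0:ℤ),(1:ℤ)) from by decide]
          · show e ((linColoring 5 ((0:ℤ),(-1:ℤ)))^5) = h (0,-1)
            rw [show (linColoring 5 ((0:ℤ),(-1:ℤ)))^5 = 4 from by decide]
            show h (NiceHex.ptF 4) = h (0,-1)
            rw [show NiceHex.ptF 4 = ((0:ℤ),(-1:ℤ)) from by decide]
          · show e ((linColoring 5 ((1:ℤ),(-1:ℤ)))^5) = h (1,-1)
            rw [show (linColoring 5 ((1:ℤ),(-1:ℤ)))^5 = 5 from by decide]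
            show h (NiceHex.ptF 5) = h (1,-1)
            rw [show NiceHex.ptF 5 = ((1:ℤ),(-1:ℤ)) from by decide]
          · show e ((linColoring 5 ((-1:ℤ),(1:ℤ)))^5) = h (-1,1)
            rw [show (linColoring 5 ((-1:ℤ),(1:ℤ)))^5 = 2 from by decide]
            show h (NiceHex.ptF 2) = h (-1,1)
            rw [show NiceHex.ptF 2 = ((-1:ℤ),(1:ℤ)) from by decide]
end

section
/- Let T be a finite tree (a finite connected acyclic simple graph) with at most 33 edges in which every vertex has degree at most 6. Then there exist two subtrees T₁ and T₂ of T (connected subgraphs, hence trees) such that their edge sets are disjoint and together contain every edge of T, their vertex sets intersect in exactly one vertex, and each of T₁ and T₂ has at most 22 edges. -/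
namespace TreeSplitAux

open SimpleGraph

variable {V : Type*} {G : SimpleGraph V}

/-- Reachability within a vertex set `S` (walk with all support in `S`). -/
def RIn (G : SimpleGraph V) (S : Set V) (x y : V) : Prop :=
  ∃ w : G.Walk x y, ∀ z ∈ w.support, z ∈ S

lemma RIn.mem_left {S : Set V} {x y : V} (h : RIn G S x y) : x ∈ S := by
  obtain ⟨w, hw⟩ := h; exact hw x w.start_mem_support

lemma RIn.mem_right {S : Set V} {x y : V} (h : RIn G S x y) : y ∈ S := by
  obtain ⟨w, hw⟩ := h; exact hw y w.end_mem_support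

lemma RIn.refl {S : Set V} {x : V} (hx : x ∈ S) : RIn G S x x :=
  ⟨.nil, by simpa using hx⟩

lemma RIn.symm {S : Set V} {x y : V} (h : RIn G S x y) : RIn G S y x := by
  obtain ⟨w, hw⟩ := h
  exact ⟨w.reverse, by simpa [SimpleGraph.Walk.support_reverse] using fun z hz => hw z (by
    simpa [SimpleGraph.Walk.support_reverse] using hz)⟩

lemma RIn.trans {S : Set V} {x y z : V} (h : RIn G S x y) (h' : RIn G S y z) :
    RIn G S x z := by
  obtain ⟨w, hw⟩ := h; obtain ⟨w', hw'⟩ := h'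
  refine ⟨w.append w', fun a ha => ?_⟩
  rcases (SimpleGraph.Walk.mem_support_append_iff _ _).mp ha with h | h
  · exact hw a h
  · exact hw' a h

lemma RIn.mono {S S' : Set V} (hS : S ⊆ S') {x y : V} (h : RIn G S x y) : RIn G S' x y := by
  obtain ⟨w, hw⟩ := h; exact ⟨w, fun z hz => hS (hw z hz)⟩

lemma RIn.cons {S : Set V} {x y z : V} (h : G.Adj x y) (hx : x ∈ S) (hr : RIn G S y z) :
    RIn G S x z := by
  obtain ⟨w, hw⟩ := hr
  refine ⟨.cons h w, fun a ha => ?_⟩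
  rw [SimpleGraph.Walk.support_cons, List.mem_cons] at ha
  rcases ha with rfl | ha
  · exact hx
  · exact hw a ha

lemma RIn.concat {S : Set V} {x y z : V} (hr : RIn G S x y) (h : G.Adj y z) (hz : z ∈ S) :
    RIn G S x z :=
  ((RIn.cons h.symm hz hr.symm)).symm

lemma RIn.exists_nbr {S : Set V} {x y : V} (h : RIn G S x y) (hxy : x ≠ y) :
    ∃ u ∈ S, G.Adj x u := by
  obtain ⟨w, hw⟩ := h
  cases w with
  | nil => exact absurd rfl hxy
  | cons h' p => exact ⟨_, hw _ (by simp), h'⟩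

/-- The induced subgraph on a vertex set. -/
def sub (G : SimpleGraph V) (S : Set V) : G.Subgraph := (⊤ : G.Subgraph).induce S

/-- Edge set of the induced subgraph on `S`. -/
def ES (G : SimpleGraph V) (S : Set V) : Set (Sym2 V) := (sub G S).edgeSet

lemma mem_ES {S : Set V} {x y : V} :
    s(x, y) ∈ ES G S ↔ x ∈ S ∧ y ∈ S ∧ G.Adj x y := by
  simp [ES, sub, Subgraph.mem_edgeSet, Subgraph.induce_adj]

lemma ES_subset {S : Set V} : ES G S ⊆ G.edgeSet := Subgraph.edgeSet_subset _

lemma ES_mono {S S' : Set V} (h : S ⊆ S') : ES G S ⊆ ES G S' := by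
  intro e
  induction e using Sym2.ind with
  | _ x y =>
    rw [mem_ES, mem_ES]
    exact fun ⟨hx, hy, ha⟩ => ⟨h hx, h hy, ha⟩

lemma ES_univ : ES G Set.univ = G.edgeSet := by
  ext e
  induction e using Sym2.ind with
  | _ x y => simp [mem_ES]

/-- In an acyclic graph, an edge cannot be avoided by a walk between its endpoints. -/
lemma no_crossing (hacyc : G.IsAcyclic) {p q : V} (h : G.Adj p q)
    (w : G.Walk p q) (hw : s(p, q) ∉ w.edges) : False := by
  have hb := (isAcyclic_iff_forall_adj_isBridge.mp hacyc) h
  rw [isBridge_iff] at hb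
  exact hb (reachable_delete_edges_iff_exists_walk.mpr ⟨w, hw⟩)

/-- Configuration: two sets covering `V`, meeting in exactly `v`, each connected (to hub `v`). -/
structure Cfg (G : SimpleGraph V) where
  A : Set V
  B : Set V
  v : V
  hI : A ∩ B = {v}
  hU : A ∪ B = Set.univ
  hA : ∀ x ∈ A, RIn G A x v
  hB : ∀ x ∈ B, RIn G B x v

lemma Cfg.vA (c : Cfg G) : c.v ∈ c.A := by
  have : c.v ∈ c.A ∩ c.B := by rw [c.hI]; exact rfl
  exact this.1

lemma Cfg.vB (c : Cfg G) : c.v ∈ c.B := by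
  have : c.v ∈ c.A ∩ c.B := by rw [c.hI]; exact rfl
  exact this.2

lemma cfg_disjoint (c : Cfg G) : Disjoint (ES G c.A) (ES G c.B) := by
  rw [Set.disjoint_left]
  intro e heA heB
  induction e using Sym2.ind with
  | _ x y =>
    rw [mem_ES] at heA heB
    have hx : x ∈ c.A ∩ c.B := ⟨heA.1, heB.1⟩
    have hy : y ∈ c.A ∩ c.B := ⟨heA.2.1, heB.2.1⟩
    rw [c.hI] at hx hy
    exact heA.2.2.ne (hx.trans hy.symm)

lemma cfg_cross_false (hacyc : G.IsAcyclic) (c : Cfg G) {x y : V} (hadj : G.Adj x y)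
    (hxA : x ∈ c.A) (hyA : y ∉ c.A) (hyB : y ∈ c.B) (hxB : x ∉ c.B) : False := by
  obtain ⟨w₁, hw₁⟩ := c.hA x hxA
  obtain ⟨w₂, hw₂⟩ := (c.hB y hyB).symm
  refine no_crossing hacyc hadj (w₁.append w₂) ?_
  rw [SimpleGraph.Walk.edges_append, List.mem_append]
  rintro (h | h)
  · exact hyA (hw₁ y (w₁.snd_mem_support_of_mem_edges h))
  · exact hxB (hw₂ x (w₂.fst_mem_support_of_mem_edges h))

lemma cfg_union (hacyc : G.IsAcyclic) (c : Cfg G) : ES G c.A ∪ ES G c.B = G.edgeSet := by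
  apply Set.Subset.antisymm (Set.union_subset ES_subset ES_subset)
  intro e he
  induction e using Sym2.ind with
  | _ x y =>
    have hadj : G.Adj x y := he
    have hx := Set.mem_univ x
    have hy := Set.mem_univ y
    rw [← c.hU] at hx hy
    by_cases hxA : x ∈ c.A <;> by_cases hyA : y ∈ c.A
    · exact Or.inl (mem_ES.mpr ⟨hxA, hyA, hadj⟩)
    · by_cases hxB : x ∈ c.B
      · exact Or.inr (mem_ES.mpr ⟨hxB, hy.resolve_left hyA, hadj⟩)
      · exact absurd (cfg_cross_false hacyc c hadj hxA hyA (hy.resolve_left hyA) hxB) not_false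
    · by_cases hyB : y ∈ c.B
      · exact Or.inr (mem_ES.mpr ⟨hx.resolve_left hxA, hyB, hadj⟩)
      · exact absurd (cfg_cross_false hacyc c hadj.symm hyA hxA (hx.resolve_left hxA) hyB)
          not_false
    · exact Or.inr (mem_ES.mpr ⟨hx.resolve_left hxA, hy.resolve_left hyA, hadj⟩)

lemma sub_verts (S : Set V) : (sub G S).verts = S := rfl

lemma walk_reachable_coe {S : Set V} :
    ∀ {x y : V} (w : G.Walk x y) (hw : ∀ z ∈ w.support, z ∈ S),
      (sub G S).coe.Reachable ⟨x, hw x w.start_mem_support⟩ ⟨y, hw y w.end_mem_support⟩ := by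
  intro x y w
  induction w with
  | nil => intro hw; rfl
  | cons h p ih =>
    intro hw
    have hw' : ∀ z ∈ p.support, z ∈ S := fun z hz => hw z (by
      rw [SimpleGraph.Walk.support_cons]; exact List.mem_cons_of_mem _ hz)
    have h1 : (sub G S).coe.Adj ⟨_, hw _ (SimpleGraph.Walk.start_mem_support _)⟩
        ⟨_, hw' _ (SimpleGraph.Walk.start_mem_support _)⟩ := by
      simp only [Subgraph.coe_adj, sub, Subgraph.induce_adj, Subgraph.top_adj]
      exact ⟨hw _ (SimpleGraph.Walk.start_mem_support _),
        hw' _ (SimpleGraph.Walk.start_mem_support _), h⟩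
    exact h1.reachable.trans (ih hw')

lemma sub_connected {S : Set V} {v : V} (hv : v ∈ S) (h : ∀ x ∈ S, RIn G S x v) :
    (sub G S).Connected := by
  rw [Subgraph.connected_iff]
  refine ⟨?_, ⟨v, hv⟩⟩
  rw [Subgraph.preconnected_iff]
  rintro ⟨x, hx⟩ ⟨y, hy⟩
  obtain ⟨w₁, hw₁⟩ := h x hx
  obtain ⟨w₂, hw₂⟩ := h y hy
  exact (walk_reachable_coe w₁ hw₁).trans (walk_reachable_coe w₂ hw₂).symm

lemma m1_reach {S : Set V} {v u : V} (huniq : ∀ w ∈ S, G.Adj v w → w = u)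
    (hu : u ∈ S) (hune : u ≠ v) :
    ∀ {x y : V} (w : G.Walk x y), y = v → (∀ z ∈ w.support, z ∈ S) → x ≠ v →
      RIn G (S \ {v}) x u := by
  intro x y w
  induction w with
  | nil => intro hy _ hx; exact absurd hy hx
  | @cons a b d h p ih =>
    intro hy hw hx
    by_cases hb : b = v
    · have ha : a = u := huniq a (hw a (by simp)) (hb ▸ h).symm
      subst ha
      exact RIn.refl ⟨hu, by simp [hune]⟩
    · exact RIn.cons h ⟨hw a (by simp), by simp [hx]⟩
        (ih hy (fun z hz => hw z (by simp [hz])) hb)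

lemma m2_reach {S C : Set V} {v : V}
    (hclose : ∀ x ∈ C, ∀ y ∈ S, y ≠ v → G.Adj x y → y ∈ C) :
    ∀ {x y : V} (w : G.Walk x y), y = v → (∀ z ∈ w.support, z ∈ S) → x ∉ C →
      RIn G (S \ C) x v := by
  intro x y w
  induction w with
  | nil =>
    intro hy hw hx
    exact hy ▸ RIn.refl ⟨hw _ (by simp), hx⟩
  | @cons a b d h p ih =>
    intro hy hw hx
    by_cases hav : a = v
    · have hra : RIn G (S \ C) a a := RIn.refl ⟨hw a (by simp), hx⟩
      rw [← hav]
      exact hra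
    · have hb : b ∉ C := fun hbC => hx (hclose b hbC a (hw a (by simp)) hav h.symm)
      exact RIn.cons h ⟨hw a (by simp), hx⟩
        (ih hy (fun z hz => hw z (by simp [hz])) hb)

lemma comp_walk_reach {S C : Set V} {v : V}
    (hclose : ∀ x ∈ C, ∀ y ∈ S, y ≠ v → G.Adj x y → y ∈ C) :
    ∀ {x y : V} (w : G.Walk x y), (∀ z ∈ w.support, z ∈ S \ {v}) → x ∈ C →
      RIn G C x y := by
  intro x y w
  induction w with
  | nil => intro _ hx; exact RIn.refl hx
  | @cons a b d h p ih =>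
    intro hw hx
    have hbS : b ∈ S \ {v} := hw b (by simp)
    have hb : b ∈ C := hclose a hx b hbS.1 (fun hbv => hbS.2 (by simp [hbv])) h
    exact RIn.cons h hx (ih (fun z hz => hw z (by simp [hz])) hb)

/-- The component of `u` in `A \ {v}`. -/
def Comp (G : SimpleGraph V) (A : Set V) (v u : V) : Set V := {x | RIn G (A \ {v}) u x}

lemma comp_subset {A : Set V} {v u : V} : Comp G A v u ⊆ A \ {v} :=
  fun _ hx => RIn.mem_right hx

lemma mem_comp_self {A : Set V} {v u : V} (huA : u ∈ A) (hne : u ≠ v) :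
    u ∈ Comp G A v u := RIn.refl ⟨huA, by simp [hne]⟩

lemma comp_closed {A : Set V} {v u : V} :
    ∀ x ∈ Comp G A v u, ∀ y ∈ A, y ≠ v → G.Adj x y → y ∈ Comp G A v u :=
  fun _ hx y hyA hyv hadj => RIn.concat hx hadj ⟨hyA, by simp [hyv]⟩

lemma comp_key (hacyc : G.IsAcyclic) {A : Set V} {v u : V} (hadj : G.Adj v u) {w : V}
    (hw : w ∈ Comp G A v u) (haw : G.Adj v w) : w = u := by
  by_contra hne
  obtain ⟨p, hp⟩ := (hw : RIn G (A \ {v}) u w)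
  refine no_crossing hacyc hadj (SimpleGraph.Walk.cons haw p.reverse) ?_
  rw [SimpleGraph.Walk.edges_cons, List.mem_cons]
  rintro (h | h)
  · exact hne (Sym2.congr_right.mp h).symm
  · have hsup := p.reverse.fst_mem_support_of_mem_edges h
    rw [SimpleGraph.Walk.support_reverse, List.mem_reverse] at hsup
    exact (hp v hsup).2 rfl

lemma comp_disjoint (hacyc : G.IsAcyclic) {A : Set V} {v u₁ u₂ : V}
    (h₁ : G.Adj v u₁) (h₂ : G.Adj v u₂) (hne : u₁ ≠ u₂) :
    Comp G A v u₁ ∩ Comp G A v u₂ = ∅ := by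
  ext x
  simp only [Set.mem_inter_iff, Set.mem_empty_iff_false, iff_false, not_and]
  intro hx1 hx2
  have h21 : u₂ ∈ Comp G A v u₁ :=
    RIn.trans (hx1 : RIn G (A \ {v}) u₁ x) (RIn.symm hx2)
  exact hne (comp_key hacyc h₁ h21 h₂).symm

lemma edge_mem_comp {C : Set V} {z w : V} (h : s(z, w) ∈ ES G C) : z ∈ C := (mem_ES.mp h).1

lemma ES_decomp_eq (hacyc : G.IsAcyclic) {A : Set V} {v u : V} (hvA : v ∈ A)
    (huA : u ∈ A) (hadj : G.Adj v u) :
    ES G A = (ES G (A \ Comp G A v u) ∪ ES G (Comp G A v u)) ∪ {s(v, u)} := by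
  set C := Comp G A v u with hC
  have hvC : v ∉ C := fun h => (comp_subset h).2 rfl
  ext e
  induction e using Sym2.ind with
  | _ x y =>
    simp only [Set.mem_union, Set.mem_singleton_iff, mem_ES]
    constructor
    · rintro ⟨hx, hy, ha⟩
      by_cases hxC : x ∈ C <;> by_cases hyC : y ∈ C
      · exact Or.inl (Or.inr (mem_ES.mpr ⟨hxC, hyC, ha⟩))
      · by_cases hyv : y = v
        · subst hyv
          have : x = u := comp_key hacyc hadj hxC ha.symm
          subst this
          exact Or.inr Sym2.eq_swap
        · exact absurd (comp_closed x hxC y hy hyv ha) hyC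
      · by_cases hxv : x = v
        · subst hxv
          have : y = u := comp_key hacyc hadj hyC ha
          subst this
          exact Or.inr rfl
        · exact absurd (comp_closed y hyC x hx hxv ha.symm) hxC
      · exact Or.inl (Or.inl (mem_ES.mpr ⟨⟨hx, hxC⟩, ⟨hy, hyC⟩, ha⟩))
    · rintro ((h | h) | h)
      · obtain ⟨hx, hy, ha⟩ := mem_ES.mp h
        exact ⟨hx.1, hy.1, ha⟩
      · obtain ⟨hx, hy, ha⟩ := mem_ES.mp h
        exact ⟨(comp_subset hx).1, (comp_subset hy).1, ha⟩
      · rcases Sym2.eq_iff.mp h with ⟨rfl, rfl⟩ | ⟨rfl, rfl⟩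
        · exact ⟨hvA, huA, hadj⟩
        · exact ⟨huA, hvA, hadj.symm⟩

lemma ES_decomp [Fintype V] (hacyc : G.IsAcyclic) {A : Set V} {v u : V} (hvA : v ∈ A)
    (huA : u ∈ A) (hadj : G.Adj v u) :
    (ES G A).ncard = (ES G (A \ Comp G A v u)).ncard + (ES G (Comp G A v u)).ncard + 1 := by
  set C := Comp G A v u with hC
  have hvC : v ∉ C := fun h => (comp_subset h).2 rfl
  have huC : u ∈ C := mem_comp_self huA hadj.ne'
  have d1 : Disjoint (ES G (A \ C)) (ES G C) := by
    rw [Set.disjoint_left]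
    intro e he1 he2
    induction e using Sym2.ind with
    | _ x y => exact (mem_ES.mp he1).1.2 (mem_ES.mp he2).1
  have d2 : Disjoint (ES G (A \ C) ∪ ES G C) {s(v, u)} := by
    rw [Set.disjoint_right]
    intro e he
    rw [Set.mem_singleton_iff] at he
    subst he
    rintro (h | h)
    · exact (mem_ES.mp h).2.1.2 huC
    · exact hvC (mem_ES.mp h).1
  rw [ES_decomp_eq hacyc hvA huA hadj, Set.ncard_union_eq d2 (Set.toFinite _) (Set.toFinite _),
    Set.ncard_union_eq d1 (Set.toFinite _) (Set.toFinite _), Set.ncard_singleton]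

lemma ES_two_branches [Fintype V] (hacyc : G.IsAcyclic) {A : Set V} {v u₁ u₂ : V}
    (hvA : v ∈ A) (hu₁A : u₁ ∈ A) (hu₂A : u₂ ∈ A)
    (h₁ : G.Adj v u₁) (h₂ : G.Adj v u₂) (hne : u₁ ≠ u₂) :
    ((ES G (Comp G A v u₁)).ncard + 1) + ((ES G (Comp G A v u₂)).ncard + 1) ≤
      (ES G A).ncard := by
  set C₁ := Comp G A v u₁ with hC₁
  set C₂ := Comp G A v u₂ with hC₂
  have hCd : C₁ ∩ C₂ = ∅ := comp_disjoint hacyc h₁ h₂ hne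
  have hvC₁ : v ∉ C₁ := fun h => (comp_subset h).2 rfl
  have hvC₂ : v ∉ C₂ := fun h => (comp_subset h).2 rfl
  have d1 : Disjoint (ES G C₁) (ES G C₂) := by
    rw [Set.disjoint_left]
    intro e he1 he2
    induction e using Sym2.ind with
    | _ x y =>
      have : x ∈ C₁ ∩ C₂ := ⟨(mem_ES.mp he1).1, (mem_ES.mp he2).1⟩
      rw [hCd] at this
      exact this
  have hene : s(v, u₁) ≠ s(v, u₂) := fun h => hne (Sym2.congr_right.mp h)
  have d2 : Disjoint (ES G C₁ ∪ ES G C₂) ({s(v, u₁), s(v, u₂)} : Set (Sym2 V)) := by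
    rw [Set.disjoint_right]
    intro e he
    rcases he with rfl | rfl <;> rintro (h | h)
    · exact hvC₁ (mem_ES.mp h).1
    · exact hvC₂ (mem_ES.mp h).1
    · exact hvC₁ (mem_ES.mp h).1
    · exact hvC₂ (mem_ES.mp h).1
  have hsub : (ES G C₁ ∪ ES G C₂) ∪ ({s(v, u₁), s(v, u₂)} : Set (Sym2 V)) ⊆ ES G A := by
    rintro e ((h | h) | h)
    · exact ES_mono (fun z hz => (comp_subset hz).1) h
    · exact ES_mono (fun z hz => (comp_subset hz).1) h
    · rcases h with rfl | rfl
      · exact mem_ES.mpr ⟨hvA, hu₁A, h₁⟩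
      · exact mem_ES.mpr ⟨hvA, hu₂A, h₂⟩
  calc ((ES G C₁).ncard + 1) + ((ES G C₂).ncard + 1)
      = ((ES G C₁ ∪ ES G C₂) ∪ ({s(v, u₁), s(v, u₂)} : Set (Sym2 V))).ncard := by
        rw [Set.ncard_union_eq d2 (Set.toFinite _) (Set.toFinite _),
          Set.ncard_union_eq d1 (Set.toFinite _) (Set.toFinite _), Set.ncard_pair hene]
        ring
    _ ≤ (ES G A).ncard := Set.ncard_le_ncard hsub (Set.toFinite _)

lemma ES_leaf {A : Set V} {v u : V} (hvA : v ∈ A) (huA : u ∈ A) (hadj : G.Adj v u)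
    (huniq : ∀ w ∈ A, G.Adj v w → w = u) :
    ES G (A \ {v}) = ES G A \ {s(v, u)} := by
  ext e
  induction e using Sym2.ind with
  | _ x y =>
    simp only [Set.mem_diff, mem_ES, Set.mem_singleton_iff]
    constructor
    · rintro ⟨⟨hx, hx'⟩, ⟨hy, hy'⟩, ha⟩
      refine ⟨⟨hx, hy, ha⟩, fun h => ?_⟩
      rcases Sym2.eq_iff.mp h with ⟨rfl, rfl⟩ | ⟨rfl, rfl⟩
      · exact hx' rfl
      · exact hy' rfl
    · rintro ⟨⟨hx, hy, ha⟩, hne⟩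
      refine ⟨⟨hx, fun hxv => ?_⟩, ⟨hy, fun hyv => ?_⟩, ha⟩
      · subst hxv
        exact hne (by rw [huniq y hy ha])
      · subst hyv
        exact hne (by rw [huniq x hx ha.symm, Sym2.eq_swap])
  
lemma m2_move [Fintype V] (hacyc : G.IsAcyclic) (c : Cfg G) {u : V} (huA : u ∈ c.A)
    (hvu : G.Adj c.v u) :
    ∃ c' : Cfg G,
      (ES G c'.A).ncard + ((ES G (Comp G c.A c.v u)).ncard + 1) = (ES G c.A).ncard := by
  set C := Comp G c.A c.v u with hCdef
  have hvC : c.v ∉ C := fun h => (comp_subset h).2 rfl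
  have huC : u ∈ C := mem_comp_self huA hvu.ne'
  refine ⟨⟨c.A \ C, c.B ∪ C, c.v, ?_, ?_, ?_, ?_⟩, ?_⟩
  · ext z
    simp only [Set.mem_inter_iff, Set.mem_diff, Set.mem_union, Set.mem_singleton_iff]
    constructor
    · rintro ⟨⟨hzA, hzC⟩, hzB | hzC'⟩
      · have hz : z ∈ c.A ∩ c.B := ⟨hzA, hzB⟩
        rw [c.hI] at hz
        exact hz
      · exact absurd hzC' hzC
    · rintro rfl
      exact ⟨⟨c.vA, hvC⟩, Or.inl c.vB⟩
  · apply Set.eq_univ_of_forall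
    intro z
    have hz := Set.mem_univ z
    rw [← c.hU] at hz
    simp only [Set.mem_union, Set.mem_diff]
    rcases hz with hzA | hzB
    · by_cases hzC : z ∈ C
      · exact Or.inr (Or.inr hzC)
      · exact Or.inl ⟨hzA, hzC⟩
    · exact Or.inr (Or.inl hzB)
  · rintro z ⟨hzA, hzC⟩
    obtain ⟨w, hw⟩ := c.hA z hzA
    exact m2_reach comp_closed w rfl hw hzC
  · intro z hz
    rw [Set.mem_union] at hz
    rcases hz with hzB | hzC
    · exact RIn.mono Set.subset_union_left (c.hB z hzB)
    · have hzu : RIn G C z u := by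
        obtain ⟨w, hw⟩ := RIn.symm (hzC : RIn G (c.A \ {c.v}) u z)
        exact comp_walk_reach comp_closed w hw hzC
      exact RIn.concat (RIn.mono Set.subset_union_right hzu) hvu.symm
        (Set.mem_union_left _ c.vB)
  · have hd := ES_decomp hacyc c.vA huA hvu
    rw [← hCdef] at hd
    show (ES G (c.A \ C)).ncard + ((ES G C).ncard + 1) = (ES G c.A).ncard
    omega

lemma step [Fintype V] (hacyc : G.IsAcyclic) (c : Cfg G)
    (h23 : 23 ≤ (ES G c.A).ncard) :
    ∃ c' : Cfg G, (ES G c'.A).ncard < (ES G c.A).ncard ∧ 12 ≤ (ES G c'.A).ncard := by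
  obtain ⟨e, he⟩ : (ES G c.A).Nonempty := Set.nonempty_of_ncard_ne_zero (by omega)
  have hx0 : ∃ x₀ ∈ c.A, x₀ ≠ c.v := by
    induction e using Sym2.ind with
    | _ x y =>
      obtain ⟨hxA, hyA, hadj⟩ := mem_ES.mp he
      by_cases hx : x = c.v
      · exact ⟨y, hyA, fun h => hadj.ne (hx.trans h.symm)⟩
      · exact ⟨x, hxA, hx⟩
  obtain ⟨x₀, hx₀A, hx₀v⟩ := hx0
  obtain ⟨u₁, hu₁A, hvu₁⟩ :=
    RIn.exists_nbr (RIn.symm (c.hA x₀ hx₀A)) (fun h => hx₀v h.symm)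
  by_cases huniq : ∀ w ∈ c.A, G.Adj c.v w → w = u₁
  · -- leaf move
    have hu₁v : u₁ ≠ c.v := hvu₁.ne'
    have hu₁B : u₁ ∉ c.B := fun h => hu₁v (by
      have hz : u₁ ∈ c.A ∩ c.B := ⟨hu₁A, h⟩
      rw [c.hI] at hz
      exact hz)
    refine ⟨⟨c.A \ {c.v}, c.B ∪ {u₁}, u₁, ?_, ?_, ?_, ?_⟩, ?_, ?_⟩
    · ext z
      simp only [Set.mem_inter_iff, Set.mem_diff, Set.mem_union, Set.mem_singleton_iff]
      constructor
      · rintro ⟨⟨hzA, hzv⟩, hzB | rfl⟩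
        · have hz : z ∈ c.A ∩ c.B := ⟨hzA, hzB⟩
          rw [c.hI] at hz
          exact absurd hz hzv
        · rfl
      · rintro rfl
        exact ⟨⟨hu₁A, hu₁v⟩, Or.inr rfl⟩
    · apply Set.eq_univ_of_forall
      intro z
      have hz := Set.mem_univ z
      rw [← c.hU] at hz
      simp only [Set.mem_union, Set.mem_diff, Set.mem_singleton_iff]
      rcases hz with hzA | hzB
      · by_cases hzv : z = c.v
        · exact Or.inr (Or.inl (hzv ▸ c.vB))
        · exact Or.inl ⟨hzA, hzv⟩
      · exact Or.inr (Or.inl hzB)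
    · rintro z ⟨hzA, hzv⟩
      obtain ⟨w, hw⟩ := c.hA z hzA
      exact m1_reach huniq hu₁A hu₁v w rfl hw (by simpa using hzv)
    · intro z hz
      rw [Set.mem_union, Set.mem_singleton_iff] at hz
      rcases hz with hzB | rfl
      · exact RIn.concat (RIn.mono Set.subset_union_left (c.hB z hzB)) hvu₁
          (Set.mem_union_right _ rfl)
      · exact RIn.refl (Set.mem_union_right _ rfl)
    all_goals
      have hES := ES_leaf c.vA hu₁A hvu₁ huniq
      have hmem : s(c.v, u₁) ∈ ES G c.A := mem_ES.mpr ⟨c.vA, hu₁A, hvu₁⟩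
      have hcard : (ES G (c.A \ {c.v})).ncard = (ES G c.A).ncard - 1 := by
        rw [hES, Set.ncard_diff_singleton_of_mem hmem]
      simp only [hcard]
      omega
  · push_neg at huniq
    obtain ⟨u₂, hu₂A, hvu₂, hne21⟩ := huniq
    have hsum := ES_two_branches hacyc c.vA hu₁A hu₂A hvu₁ hvu₂ hne21.symm
    by_cases hc : (ES G (Comp G c.A c.v u₁)).ncard ≤ (ES G (Comp G c.A c.v u₂)).ncard
    · obtain ⟨c', hc'⟩ := m2_move hacyc c hu₁A hvu₁
      exact ⟨c', by omega, by omega⟩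
    · obtain ⟨c', hc'⟩ := m2_move hacyc c hu₂A hvu₂
      exact ⟨c', by omega, by omega⟩

lemma descend [Fintype V] (hacyc : G.IsAcyclic) (hm : G.edgeSet.ncard ≤ 33) :
    ∀ (n : ℕ) (c : Cfg G), (ES G c.A).ncard ≤ n →
      G.edgeSet.ncard ≤ (ES G c.A).ncard + 22 →
      ∃ c' : Cfg G, (ES G c'.A).ncard ≤ 22 ∧ G.edgeSet.ncard ≤ (ES G c'.A).ncard + 22 := by
  intro n
  induction n with
  | zero => intro c h0 hinv; exact ⟨c, by omega, hinv⟩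
  | succ n ih =>
    intro c hn hinv
    by_cases h22 : (ES G c.A).ncard ≤ 22
    · exact ⟨c, h22, hinv⟩
    · obtain ⟨c', hlt, h12⟩ := step hacyc c (by omega)
      exact ih c' (by omega) (by omega)

end TreeSplitAux

/-- A finite tree with at most 33 edges and maximum degree at most 6 can be split into
two subtrees whose edge sets partition the edge set of the tree, whose vertex sets meet
in exactly one vertex, and each of which has at most 22 edges. -/
theorem tree_splits_into_two_subtrees {V : Type*} [Fintype V]
    (G : SimpleGraph V) [DecidableRel G.Adj]
    (hconn : G.Connected) (hacyc : G.IsAcyclic)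
    (hedges : G.edgeFinset.card ≤ 33)
    (hdeg : ∀ v : V, G.degree v ≤ 6) :
    ∃ T₁ T₂ : G.Subgraph,
      T₁.Connected ∧ T₂.Connected ∧
      Disjoint T₁.edgeSet T₂.edgeSet ∧
      T₁.edgeSet ∪ T₂.edgeSet = G.edgeSet ∧
      (∃ v : V, T₁.verts ∩ T₂.verts = {v}) ∧
      T₁.edgeSet.ncard ≤ 22 ∧ T₂.edgeSet.ncard ≤ 22 := by
  classical
  open TreeSplitAux in
  obtain ⟨v₀⟩ := hconn.nonempty
  have hm : G.edgeSet.ncard ≤ 33 := by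
    rwa [Set.ncard_eq_toFinset_card' G.edgeSet]
  have hA0 : ∀ x ∈ (Set.univ : Set V), RIn G Set.univ x v₀ := fun x _ =>
    (hconn.preconnected x v₀).elim (fun w => ⟨w, fun z _ => trivial⟩)
  let c₀ : Cfg G := ⟨Set.univ, {v₀}, v₀, by simp, by simp, hA0, fun x hx => by
    rw [Set.mem_singleton_iff] at hx
    subst hx
    exact RIn.refl rfl⟩
  have hc₀ : ES G c₀.A = G.edgeSet := ES_univ
  obtain ⟨c, hc22, hcinv⟩ := descend hacyc hm ((ES G c₀.A).ncard) c₀ le_rfl (by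
    rw [hc₀]; omega)
  have hab : (ES G c.A).ncard + (ES G c.B).ncard = G.edgeSet.ncard := by
    rw [← Set.ncard_union_eq (cfg_disjoint c) (Set.toFinite _) (Set.toFinite _),
      cfg_union hacyc c]
  refine ⟨sub G c.A, sub G c.B, sub_connected c.vA c.hA, sub_connected c.vB c.hB,
    cfg_disjoint c, cfg_union hacyc c, ⟨c.v, c.hI⟩, hc22, ?_⟩
  show (ES G c.B).ncard ≤ 22
  omega
end
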